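/- arXiv:2109.08854 — 6 statements merged into one kernel-verified Lean document; each statement's English description precedes it below -/
import Mathlib

section
/- An FSA S is not strongly periodically detectable if and only if at least one of the following holds: (1) there exist γ∈𝓛(S) and x∈M(S,γ) such that |M(S,γ)|>1 and there is a transition sequence x→^{s1}x'→^{s2}x' in S for some s1∈(T_uo)*, s2∈(T_uo)^+, x'∈X; (2) there exist label sequences α,β∈Σ* with αβ∈𝓛(S), |β|>0, M(S,α)=M(S,αβ), and |M(S,αβ̄)|>1 for every prefix β̄ of β. -/
/-- A finite-state automaton (FSA) `S = (X, T, X0, δ, Σ, ℓ)`: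
states `X`, events `T`, outputs `O` (the alphabet Σ), initial states `init`,
transition relation `delta`, and labeling function `label` where `none` encodes ε. -/
structure FSA (X T O : Type) where
  init : Set X
  delta : X → T → X → Prop
  label : T → Option O

/-- Composed events of the (ε-extended) self-composition: pairs of observable
events with the same label, unobservable events on the left/right component,
and the added ε event. -/
inductive CEvent (T : Type) where
  | both : T → T → CEvent T
  | left : T → CEvent T
  | right : T → CEvent T
  | eps : CEvent T

namespace FSA

variable {X T O : Type}

/-- Extension of `delta` to finite event sequences: `x →^s x'`. -/
def Run (M : FSA X T O) : X → List T → X → Prop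
  | x, [], x' => x = x'
  | x, t :: s, x' => ∃ y, M.delta x t y ∧ Run M y s x'

/-- The label sequence `ℓ(s)` of a finite event sequence. -/
def labelSeq (M : FSA X T O) (s : List T) : List O :=
  s.filterMap M.label

/-- Membership in `L^ω(S)`: infinite event sequences generated from some initial state. -/
def InLomega (M : FSA X T O) (s : ℕ → T) : Prop :=
  ∃ x : ℕ → X, x 0 ∈ M.init ∧ ∀ i, M.delta (x i) (s i) (x (i + 1))

/-- `s'` is a finite prefix of the infinite sequence `s`. -/
def IsPrefixOf (s' : List T) (s : ℕ → T) : Prop :=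
  ∀ i : Fin s'.length, s'.get i = s i

/-- The current-state estimate `M(S,σ)`. -/
def est (M : FSA X T O) (σ : List O) : Set X :=
  {x | ∃ x0 ∈ M.init, ∃ s : List T, M.labelSeq s = σ ∧ M.Run x0 s x}

/-- Strong periodic detectability (SPD). -/
def SPD (M : FSA X T O) : Prop :=
  ∃ k : ℕ, 0 < k ∧ ∀ s : ℕ → T, M.InLomega s → ∀ s' : List T, IsPrefixOf s' s →
    ∃ s'' : List T, (M.labelSeq s'').length < k ∧ IsPrefixOf (s' ++ s'') s ∧
      (M.est (M.labelSeq (s' ++ s''))).ncard = 1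

/-- Strong periodic D-detectability with respect to `Tspec`. -/
def SPDD (M : FSA X T O) (Tspec : Set (X × X)) : Prop :=
  ∃ k : ℕ, 0 < k ∧ ∀ s : ℕ → T, M.InLomega s → ∀ s' : List T, IsPrefixOf s' s →
    ∃ s'' : List T, (M.labelSeq s'').length < k ∧ IsPrefixOf (s' ++ s'') s ∧
      (M.est (M.labelSeq (s' ++ s'')) ×ˢ M.est (M.labelSeq (s' ++ s''))) ∩ Tspec = ∅

/-- An unobservable transition sequence `x →^s x'` (all events labeled ε). -/
def UnobsRun (M : FSA X T O) (x : X) (s : List T) (x' : X) : Prop :=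
  M.Run x s x' ∧ ∀ t ∈ s, M.label t = none

/-- Unobservable reach `UR` of a set of states. -/
def UR (M : FSA X T O) (q : Set X) : Set X :=
  {x' | ∃ x ∈ q, ∃ s : List T, M.UnobsRun x s x'}

/-- Observable reach `Reach_σ` of a set of states. -/
def ReachO (M : FSA X T O) (σ : O) (q : Set X) : Set X :=
  {x' | ∃ x ∈ q, ∃ t : T, M.delta x t x' ∧ M.label t = some σ}

/-- Initial state `M(S,ε) = UR(X0)` of the observer/detector. -/
def obsInit (M : FSA X T O) : Set X := M.UR M.init

/-- Observer transition `δ_obs(q,σ) = UR(Reach_σ(q))` (defined when nonempty). -/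
def obsTrans (M : FSA X T O) (q : Set X) (σ : O) (q' : Set X) : Prop :=
  q' = M.UR (M.ReachO σ q) ∧ q'.Nonempty

/-- Sequences of observer transitions. -/
def ObsRun (M : FSA X T O) : Set X → List O → Set X → Prop
  | q, [], q' => q = q'
  | q, σ :: w, q' => ∃ q1, M.obsTrans q σ q1 ∧ ObsRun M q1 w q'

/-- Reachable states of the observer `S_obs`. -/
def ObsReachable (M : FSA X T O) (q : Set X) : Prop :=
  ∃ w : List O, M.ObsRun M.obsInit w q

/-- Detector transition relation `δ_det`. -/
def detTrans (M : FSA X T O) (q : Set X) (σ : O) (q' : Set X) : Prop :=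
  (1 < (M.UR (M.ReachO σ q)).ncard ∧ q' ⊆ M.UR (M.ReachO σ q) ∧ q'.ncard = 2) ∨
  ((M.UR (M.ReachO σ q)).ncard = 1 ∧ q' = M.UR (M.ReachO σ q))

/-- Sequences of detector transitions. -/
def DetRun (M : FSA X T O) : Set X → List O → Set X → Prop
  | q, [], q' => q = q'
  | q, σ :: w, q' => ∃ q1, M.detTrans q σ q1 ∧ DetRun M q1 w q'

/-- Reachable states of the detector `S_det`. -/
def DetReachable (M : FSA X T O) (q : Set X) : Prop :=
  ∃ w : List O, M.DetRun M.obsInit w q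

/-- The label of a composed event. -/
def cLabel (M : FSA X T O) : CEvent T → Option O
  | CEvent.both t _ => M.label t
  | CEvent.left _ => none
  | CEvent.right _ => none
  | CEvent.eps => none

/-- The label sequence of a sequence of composed events. -/
def ccLabelSeq (M : FSA X T O) (s : List (CEvent T)) : List O :=
  s.filterMap M.cLabel

/-- Transition relation `δ'` of the self-composition `CC_A(S)`. -/
def ccTrans (M : FSA X T O) : X × X → CEvent T → X × X → Prop
  | p, CEvent.both t t', p' =>
      M.delta p.1 t p'.1 ∧ M.delta p.2 t' p'.2 ∧
      ∃ σ : O, M.label t = some σ ∧ M.label t' = some σ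
  | p, CEvent.left t, p' => M.delta p.1 t p'.1 ∧ M.label t = none ∧ p.2 = p'.2
  | p, CEvent.right t, p' => p.1 = p'.1 ∧ M.label t = none ∧ M.delta p.2 t p'.2
  | _, CEvent.eps, _ => False

/-- Transition relation of the ε-extended self-composition `CC^ε_A(S)`:
all transitions of `CC_A(S)` plus, for `x1 ≠ x2`, the added ε-transitions
`((x1,x2),ε,(x1,x1))` and `((x1,x2),ε,(x2,x2))` under the stated conditions. -/
def ccEpsTrans (M : FSA X T O) (p : X × X) (e : CEvent T) (p' : X × X) : Prop :=
  M.ccTrans p e p' ∨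
  (e = CEvent.eps ∧ p.1 ≠ p.2 ∧ (p' = (p.1, p.1) ∨ p' = (p.2, p.2)) ∧
    ∃ (t' : CEvent T) (r : X × X),
      M.ccTrans p' t' r ∧ ∀ t'' : CEvent T, ¬ M.ccTrans p t'' r)

/-- Sequences of transitions of `CC^ε_A(S)`. -/
def CCRun (M : FSA X T O) : X × X → List (CEvent T) → X × X → Prop
  | p, [], p' => p = p'
  | p, e :: s, p' => ∃ r, M.ccEpsTrans p e r ∧ CCRun M r s p'

/-- Reachable states of `CC^ε_A(S)` (from `X0 × X0`). -/
def CCReachable (M : FSA X T O) (p : X × X) : Prop :=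
  ∃ p0 : X × X, p0.1 ∈ M.init ∧ p0.2 ∈ M.init ∧ ∃ s : List (CEvent T), M.CCRun p0 s p

/-- A state is reachable in `S`. -/
def StateReachable (M : FSA X T O) (x : X) : Prop :=
  ∃ x0 ∈ M.init, ∃ s : List T, M.Run x0 s x

/-- Deadlock-freeness. -/
def DeadlockFree (M : FSA X T O) : Prop :=
  ∀ x : X, M.StateReachable x → ∃ (t : T) (x' : X), M.delta x t x'

/-- Divergence-freeness (promptness): no reachable unobservable transition cycle. -/
def DivergenceFree (M : FSA X T O) : Prop :=
  ∀ x : X, M.StateReachable x → ∀ s : List T, s ≠ [] →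
    (∀ t ∈ s, M.label t = none) → ¬ M.Run x s x

end FSA

namespace FSAAux
open FSA

variable {X T O : Type}

/-- List power: `lpow l n = l ++ l ++ ... ++ l` (n times). -/
def lpow {α : Type} (l : List α) : ℕ → List α
  | 0 => []
  | n + 1 => l ++ lpow l n

lemma lpow_add {α : Type} (l : List α) (a b : ℕ) :
    lpow l (a + b) = lpow l a ++ lpow l b := by
  induction a with
  | zero => simp [lpow]
  | succ a ih =>
    have : a + 1 + b = (a + b) + 1 := by omega
    rw [this, lpow, lpow, ih, List.append_assoc]

lemma run_append (M : FSA X T O) (u v : List T) (x y : X) :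
    M.Run x (u ++ v) y ↔ ∃ z, M.Run x u z ∧ M.Run z v y := by
  induction u generalizing x with
  | nil =>
    constructor
    · intro h; exact ⟨x, rfl, by simpa using h⟩
    · rintro ⟨z, hz, hv⟩
      have : x = z := hz
      simpa [this] using hv
  | cons t u ih =>
    constructor
    · rintro ⟨w, hd, hr⟩
      obtain ⟨z, h1, h2⟩ := (ih w).1 hr
      exact ⟨z, ⟨w, hd, h1⟩, h2⟩
    · rintro ⟨z, ⟨w, hd, h1⟩, h2⟩
      exact ⟨w, hd, (ih w).2 ⟨z, h1, h2⟩⟩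

lemma labelSeq_append (M : FSA X T O) (u v : List T) :
    M.labelSeq (u ++ v) = M.labelSeq u ++ M.labelSeq v := by
  simp [FSA.labelSeq]

/-- One observable step of the estimator as a set operation. -/
def estStep (M : FSA X T O) (q : Set X) (w : List O) : Set X :=
  {x | ∃ y ∈ q, ∃ e : List T, M.labelSeq e = w ∧ M.Run y e x}

lemma est_append (M : FSA X T O) (σ w : List O) :
    M.est (σ ++ w) = estStep M (M.est σ) w := by
  ext x
  constructor
  · rintro ⟨x0, h0, e, he, hr⟩
    rw [FSA.labelSeq, List.filterMap_eq_append_iff] at he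
    obtain ⟨ea, eb, rfl, ha, hb⟩ := he
    obtain ⟨y, h1, h2⟩ := (run_append M ea eb x0 x).1 hr
    exact ⟨y, ⟨x0, h0, ea, ha, h1⟩, eb, hb, h2⟩
  · rintro ⟨y, ⟨x0, h0, ea, ha, h1⟩, eb, hb, h2⟩
    refine ⟨x0, h0, ea ++ eb, ?_, (run_append M ea eb x0 x).2 ⟨y, h1, h2⟩⟩
    rw [labelSeq_append, ha, hb]

lemma labelSeq_lpow (M : FSA X T O) (d : List T) (j : ℕ) :
    M.labelSeq (lpow d j) = lpow (M.labelSeq d) j := by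
  induction j with
  | zero => simp [lpow, FSA.labelSeq]
  | succ j ih => rw [lpow, lpow, labelSeq_append, ih]

lemma lpow_lpow {α : Type} (l : List α) (c j : ℕ) :
    lpow (lpow l c) j = lpow l (c * j) := by
  induction j with
  | zero => simp [lpow]
  | succ j ih =>
    rw [lpow, ih, ← lpow_add]
    congr 1
    ring

/-- The list of the first `m` events of an infinite sequence. -/
def pre (s : ℕ → T) (m : ℕ) : List T := (List.range m).map s

@[simp] lemma pre_length (s : ℕ → T) (m : ℕ) : (pre s m).length = m := by
  simp [pre]

lemma pre_succ (s : ℕ → T) (m : ℕ) : pre s (m + 1) = pre s m ++ [s m] := by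
  simp [pre, List.range_succ]

@[simp] lemma pre_getElem (s : ℕ → T) (m i : ℕ) (h : i < (pre s m).length) :
    (pre s m)[i] = s i := by
  simp [pre] at h ⊢

lemma pre_prefix (s : ℕ → T) {m m' : ℕ} (h : m ≤ m') : pre s m <+: pre s m' := by
  induction m' with
  | zero => have : m = 0 := by omega
            simp [this]
  | succ m' ih =>
    rcases Nat.lt_or_ge m (m' + 1) with h' | h'
    · exact (ih (by omega)).trans (by rw [pre_succ]; exact List.prefix_append _ _)
    · have : m = m' + 1 := by omega
      simp [this]

lemma isPrefixOf_pre (s : ℕ → T) (m : ℕ) : IsPrefixOf (pre s m) s := by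
  intro i
  rw [List.get_eq_getElem]
  simp

lemma eq_pre_of_isPrefixOf {s' : List T} {s : ℕ → T} (h : IsPrefixOf s' s) :
    s' = pre s s'.length := by
  apply List.ext_get (by simp)
  intro i h1 h2
  rw [h ⟨i, h1⟩]
  rw [List.get_eq_getElem]
  simp

lemma run_pre (M : FSA X T O) (s : ℕ → T) (x : ℕ → X)
    (hdel : ∀ i, M.delta (x i) (s i) (x (i + 1))) (m : ℕ) :
    M.Run (x 0) (pre s m) (x m) := by
  induction m with
  | zero => exact rfl
  | succ m ih =>
    rw [pre_succ]
    exact (run_append M _ _ _ _).2 ⟨x m, ih, ⟨x (m+1), hdel m, rfl⟩⟩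

lemma run_seg (M : FSA X T O) (s : ℕ → T) (x : ℕ → X)
    (hdel : ∀ i, M.delta (x i) (s i) (x (i + 1))) (c a : ℕ) :
    M.Run (x a) ((List.range' a c).map s) (x (a + c)) := by
  induction c generalizing a with
  | zero => exact rfl
  | succ c ih =>
    rw [List.range'_succ]
    refine ⟨x (a + 1), hdel a, ?_⟩
    have := ih (a + 1)
    have he : a + 1 + c = a + (c + 1) := by omega
    rwa [he] at this

end FSAAux

namespace FSAAux
open FSA

variable {X T O : Type}

/-- Dependent-choice style construction of an infinite sequence of steps. -/
lemma nat_rec_choice {A S : Type} (R : S → A × S → Prop) (h : ∀ p, ∃ q, R p q) (p0 : S) :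
    ∃ (f : ℕ → S) (s : ℕ → A), f 0 = p0 ∧ ∀ i, R (f i) (s i, f (i + 1)) := by
  classical
  let F : S → A × S := fun p => (h p).choose
  let f : ℕ → S := fun n => Nat.rec p0 (fun _ p => (F p).2) n
  refine ⟨f, fun n => (F (f n)).1, rfl, fun i => ?_⟩
  exact (h (f i)).choose_spec

/-- An invariant that can always take a step yields an infinite run. -/
lemma exists_infinite_run (M : FSA X T O) (P : X → Prop) (Q : T → Prop)
    (hstep : ∀ z, P z → ∃ t z', M.delta z t z' ∧ Q t ∧ P z') (y : X) (hy : P y) :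
    ∃ (s0 : ℕ → T) (xf : ℕ → X), xf 0 = y ∧ (∀ i, M.delta (xf i) (s0 i) (xf (i + 1))) ∧
      ∀ i, Q (s0 i) := by
  obtain ⟨f, s, hf0, hR⟩ := nat_rec_choice
    (S := {z : X // P z})
    (fun p q => M.delta p.1 q.1 q.2.1 ∧ Q q.1)
    (fun p => by
      obtain ⟨t, z', h1, h2, h3⟩ := hstep p.1 p.2
      exact ⟨(t, ⟨z', h3⟩), h1, h2⟩) ⟨y, hy⟩
  exact ⟨s, fun i => (f i).1, by show (f 0).1 = y; rw [hf0], fun i => (hR i).1, fun i => (hR i).2⟩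

/-- Glue a finite run in front of an infinite run. -/
lemma glue_run (M : FSA X T O) :
    ∀ (u : List T) (x0 y : X), M.Run x0 u y →
    ∀ (s0 : ℕ → T) (xf : ℕ → X), xf 0 = y → (∀ i, M.delta (xf i) (s0 i) (xf (i + 1))) →
    ∃ (s : ℕ → T) (x : ℕ → X), x 0 = x0 ∧ (∀ i, M.delta (x i) (s i) (x (i + 1))) ∧
      IsPrefixOf u s ∧ ∀ i, s (u.length + i) = s0 i := by
  intro u
  induction u with
  | nil =>
    intro x0 y hr s0 xf h0 hd
    have hxy : x0 = y := hr
    refine ⟨s0, xf, by rw [h0, hxy], hd, ?_, fun i => by simp⟩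
    intro i
    exact absurd i.isLt (by simp)
  | cons t u ih =>
    intro x0 y hr s0 xf h0 hd
    obtain ⟨y1, hδ, hr'⟩ := hr
    obtain ⟨s, x, hx0, hdel, hpre, hoff⟩ := ih y1 y hr' s0 xf h0 hd
    refine ⟨fun n => Nat.casesOn n t s, fun n => Nat.casesOn n x0 x, rfl, ?_, ?_, ?_⟩
    · intro i
      cases i with
      | zero => simpa [hx0] using hδ
      | succ i => exact hdel i
    · rintro ⟨i, hi⟩
      cases i with
      | zero => rfl
      | succ j => exact hpre ⟨j, by simpa using hi⟩
    · intro i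
      have : (t :: u).length + i = (u.length + i) + 1 := by simp; omega
      rw [this]
      exact hoff i

/-- Extend a finite run by an infinite unobservable run. -/
lemma extend_unobs (M : FSA X T O) (x0 : X) (h0 : x0 ∈ M.init) (u : List T) (y : X)
    (hr : M.Run x0 u y) (P : X → Prop) (hy : P y)
    (hstep : ∀ z, P z → ∃ t z', M.delta z t z' ∧ M.label t = none ∧ P z') :
    ∃ s : ℕ → T, M.InLomega s ∧ IsPrefixOf u s ∧
      ∀ i, u.length ≤ i → M.label (s i) = none := by
  obtain ⟨s0, xf, hxf0, hd0, hQ⟩ :=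
    exists_infinite_run M P (fun t => M.label t = none) hstep y hy
  obtain ⟨s, x, hx0, hdel, hpre, hoff⟩ := glue_run M u x0 y hr s0 xf hxf0 hd0
  refine ⟨s, ⟨x, by rw [hx0]; exact h0, hdel⟩, hpre, fun i hi => ?_⟩
  have : i = u.length + (i - u.length) := by omega
  rw [this, hoff]
  exact hQ _

/-- An infinite run obtained by looping through a cycle `d` at `z`, whose finite
prefixes are prefixes of powers of `d`. -/
lemma exists_cycle_run (M : FSA X T O) (z : X) (d : List T) (hd : d ≠ [])
    (hcyc : M.Run z d z) :
    ∃ (s0 : ℕ → T) (xf : ℕ → X), xf 0 = z ∧ (∀ i, M.delta (xf i) (s0 i) (xf (i + 1))) ∧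
      ∀ m, ∃ j, pre s0 m <+: lpow d j := by
  obtain ⟨f, s, hf0, hR⟩ := nat_rec_choice
    (S := {p : X × List T // M.Run p.1 p.2 z ∧ p.2 ≠ []})
    (fun p q => M.delta p.1.1 q.1 q.2.1.1 ∧ ∃ a, p.1.2 ++ lpow d a = q.1 :: q.2.1.2)
    (fun p => by
      obtain ⟨hrun, hne⟩ := p.2
      rcases hp : p.1.2 with _ | ⟨t, e⟩
      · exact absurd hp hne
      · rw [hp] at hrun
        obtain ⟨z1, hδ, hr'⟩ := hrun
        rcases he : e with _ | ⟨t', e'⟩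
        · rw [he] at hr'
          have hz1 : z1 = z := hr'
          refine ⟨(t, ⟨(z, d), hcyc, hd⟩), show M.delta p.1.1 t z from hz1 ▸ hδ, 1, ?_⟩
          simp [hp, he, lpow]
        · refine ⟨(t, ⟨(z1, e), hr', by simp [he]⟩), hδ, 0, ?_⟩
          simp [hp, he, lpow])
    ⟨(z, d), hcyc, hd⟩
  refine ⟨s, fun i => (f i).1.1, by show (f 0).1.1 = z; rw [hf0], fun i => (hR i).1, fun m => ?_⟩
  have key : ∀ m, ∃ j, pre s m ++ (f m).1.2 = lpow d j := by
    intro m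
    induction m with
    | zero => exact ⟨1, by simp [pre, hf0, lpow]⟩
    | succ m ih =>
      obtain ⟨j, hj⟩ := ih
      obtain ⟨a, ha⟩ := (hR m).2
      refine ⟨j + a, ?_⟩
      have ha' : (f m).1.2 ++ lpow d a = s m :: (f (m + 1)).1.2 := ha
      rw [pre_succ, lpow_add, ← hj]
      simp only [List.append_assoc, List.singleton_append, ha']
  obtain ⟨j, hj⟩ := key m
  exact ⟨j, (f m).1.2, hj⟩

end FSAAux

namespace FSAAux
open FSA

variable {X T O : Type}

lemma cond1_not_spd (M : FSA X T O) (γ : List O) (x : X) (hx : x ∈ M.est γ)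
    (hcard : 1 < (M.est γ).ncard) (x' : X) (s1 s2 : List T) (h1 : M.UnobsRun x s1 x')
    (hs2 : s2 ≠ []) (h2 : M.UnobsRun x' s2 x') : ¬ M.SPD := by
  rintro ⟨k, hk, hspd⟩
  obtain ⟨x0, h0, w, hw, hrw⟩ := hx
  set P : X → Prop := fun z => ∃ d, d ≠ [] ∧ M.UnobsRun z d x' with hP
  have hPx : P x := by
    refine ⟨s1 ++ s2, fun h => hs2 (List.append_eq_nil_iff.1 h).2, ?_, ?_⟩
    · exact (run_append M s1 s2 x x').2 ⟨x', h1.1, h2.1⟩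
    · intro t ht
      rcases List.mem_append.1 ht with h | h
      · exact h1.2 t h
      · exact h2.2 t h
  have hstep : ∀ z, P z → ∃ t z', M.delta z t z' ∧ M.label t = none ∧ P z' := by
    rintro z ⟨d, hdne, hrun, hunobs⟩
    cases d with
    | nil => exact absurd rfl hdne
    | cons t d' =>
      obtain ⟨z1, hδ, hr'⟩ := hrun
      refine ⟨t, z1, hδ, hunobs t (List.mem_cons_self), ?_⟩
      by_cases hd' : d' = []
      · subst hd'
        have hz1 : z1 = x' := hr'
        subst hz1
        exact ⟨s2, hs2, h2⟩
      · exact ⟨d', hd', hr', fun t' ht' => hunobs t' (List.mem_cons_of_mem _ ht')⟩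
  obtain ⟨s, hLom, hupre, hnone⟩ := extend_unobs M x0 h0 w x hrw P hPx hstep
  obtain ⟨s'', hlen, hps, hcard1⟩ := hspd s hLom w hupre
  have hnil : M.labelSeq s'' = [] := by
    apply List.filterMap_eq_nil_iff.2
    intro t ht
    obtain ⟨i, hi, rfl⟩ := List.mem_iff_getElem.1 ht
    have h3 : w.length + i < (w ++ s'').length := by simp; omega
    have h4 : (w ++ s'')[w.length + i]'h3 = s (w.length + i) := hps ⟨w.length + i, h3⟩
    rw [List.getElem_append_right (by omega)] at h4
    simp only [Nat.add_sub_cancel_left] at h4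
    rw [h4]
    exact hnone _ (by omega)
  rw [labelSeq_append, hw, hnil, List.append_nil] at hcard1
  omega

lemma exists_est_cycle (M : FSA X T O) [Finite X] (α β : List O)
    (hne : (M.est (α ++ β)).Nonempty) (heq : M.est α = M.est (α ++ β)) :
    ∃ (z : X) (d : List T) (c : ℕ), z ∈ M.est α ∧ M.Run z d z ∧ 0 < c ∧
      M.labelSeq d = lpow β c := by
  classical
  have hpred : ∀ p : {z : X // z ∈ M.est (α ++ β)},
      ∃ q : (List T) × {z : X // z ∈ M.est (α ++ β)},
        M.labelSeq q.1 = β ∧ M.Run q.2.1 q.1 p.1 := by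
    rintro ⟨z, hz⟩
    rw [est_append] at hz
    obtain ⟨y, hy, e, he, hr⟩ := hz
    exact ⟨(e, ⟨y, by rw [← heq]; exact hy⟩), he, hr⟩
  obtain ⟨f, ev, hf0, hR⟩ := nat_rec_choice _ hpred ⟨hne.choose, hne.choose_spec⟩
  have chain : ∀ c i, ∃ d, M.Run (f (i + c)).1 d (f i).1 ∧ M.labelSeq d = lpow β c := by
    intro c
    induction c with
    | zero => exact fun i => ⟨[], rfl, by simp [FSA.labelSeq, lpow]⟩
    | succ c ih =>
      intro i
      obtain ⟨d, hd, hl⟩ := ih i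
      refine ⟨ev (i + c) ++ d, ?_, ?_⟩
      · exact (run_append M _ _ _ _).2 ⟨(f (i + c)).1, (hR (i + c)).2, hd⟩
      · rw [labelSeq_append, (hR (i + c)).1, hl]
        rfl
  obtain ⟨i, j, hij, hfij⟩ := Finite.exists_ne_map_eq_of_infinite f
  have main : ∀ i j, i < j → f i = f j →
      ∃ (z : X) (d : List T) (c : ℕ), z ∈ M.est α ∧ M.Run z d z ∧ 0 < c ∧
        M.labelSeq d = lpow β c := by
    intro i j hlt hfe
    obtain ⟨d, hd, hl⟩ := chain (j - i) i
    have hji : i + (j - i) = j := by omega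
    rw [hji, ← hfe] at hd
    exact ⟨(f i).1, d, j - i, by rw [heq]; exact (f i).2, hd, by omega, hl⟩
  rcases hij.lt_or_gt with h | h
  · exact main i j h hfij
  · exact main j i h hfij.symm

lemma est_ncard_of_prefix_lpow (M : FSA X T O) (α β : List O)
    (heq : M.est α = M.est (α ++ β))
    (hbig : ∀ β', β' <+: β → 1 < (M.est (α ++ β')).ncard) :
    ∀ (N : ℕ) (w : List O), w <+: lpow β N → 1 < (M.est (α ++ w)).ncard := by
  intro N
  induction N with
  | zero =>
    intro w hw
    have hw' : w = [] := by
      have : lpow β 0 = ([] : List O) := rfl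
      rw [this] at hw
      exact List.prefix_nil.1 hw
    rw [hw']
    exact hbig [] List.nil_prefix
  | succ N ih =>
    intro w hw
    have hw1 : w <+: β ++ lpow β N := hw
    by_cases hlen : w.length ≤ β.length
    · exact hbig w (List.prefix_of_prefix_length_le hw1 (List.prefix_append β _) hlen)
    · have hβw : β <+: w :=
        List.prefix_of_prefix_length_le (List.prefix_append β _) hw1 (by omega)
      obtain ⟨w', rfl⟩ := hβw
      have hw' : w' <+: lpow β N := (List.prefix_append_right_inj β).1 hw1
      have heq2 : M.est (α ++ (β ++ w')) = M.est (α ++ w') := by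
        rw [← List.append_assoc, est_append M (α ++ β) w', ← heq, ← est_append]
      rw [heq2]
      exact ih w' hw'

lemma cond2_not_spd (M : FSA X T O) [Finite X] (α β : List O)
    (hne : (M.est (α ++ β)).Nonempty) (hβ : β ≠ []) (heq : M.est α = M.est (α ++ β))
    (hbig : ∀ β', β' <+: β → 1 < (M.est (α ++ β')).ncard) : ¬ M.SPD := by
  rintro ⟨k, hk, hspd⟩
  obtain ⟨z, d, c, hzQ, hcyc, hc, hlab⟩ := exists_est_cycle M α β hne heq
  have hd : d ≠ [] := by
    intro h
    rw [h] at hlab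
    have : ([] : List O) = lpow β c := by simpa [FSA.labelSeq] using hlab
    rcases c with _ | c
    · omega
    · have : ([] : List O) = β ++ lpow β c := this
      exact hβ (List.append_eq_nil_iff.1 this.symm).1
  obtain ⟨x0, h0, ea, hea, hra⟩ := hzQ
  obtain ⟨s0, xf, hxf0, hdel0, hprefix⟩ := exists_cycle_run M z d hd hcyc
  obtain ⟨s, x, hx0, hdel, hupre, hoff⟩ := glue_run M ea x0 z hra s0 xf hxf0 hdel0
  have hLom : M.InLomega s := ⟨x, by rw [hx0]; exact h0, hdel⟩
  obtain ⟨s'', hlen, hps, hcard⟩ := hspd s hLom ea hupre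
  have hs2 : s'' = pre s0 s''.length := by
    apply List.ext_get (by simp)
    intro i h1 h2
    have h3 : ea.length + i < (ea ++ s'').length := by simp; omega
    have h4 : (ea ++ s'')[ea.length + i]'h3 = s (ea.length + i) := hps ⟨ea.length + i, h3⟩
    rw [List.getElem_append_right (by omega)] at h4
    simp only [Nat.add_sub_cancel_left] at h4
    show s''[i] = (pre s0 s''.length)[i]
    rw [pre_getElem, h4, hoff]
  obtain ⟨j, hpj⟩ := hprefix s''.length
  rw [← hs2] at hpj
  have hlp : M.labelSeq s'' <+: lpow β (c * j) := by
    have := List.IsPrefix.filterMap M.label hpj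
    rw [show List.filterMap M.label (lpow d j) = M.labelSeq (lpow d j) from rfl,
      labelSeq_lpow, hlab, lpow_lpow] at this
    exact this
  have h2 := est_ncard_of_prefix_lpow M α β heq hbig (c * j) (M.labelSeq s'') hlp
  rw [labelSeq_append, hea] at hcard
  omega

end FSAAux

namespace FSAAux
open FSA

variable {X T O : Type}

lemma spd_of_not (M : FSA X T O) [Fintype X]
    (hC1 : ¬ (∃ (γ : List O) (x : X), x ∈ M.est γ ∧ 1 < (M.est γ).ncard ∧
          ∃ (x' : X) (s1 s2 : List T),
            M.UnobsRun x s1 x' ∧ s2 ≠ [] ∧ M.UnobsRun x' s2 x'))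
    (hC2 : ¬ (∃ α β : List O, (M.est (α ++ β)).Nonempty ∧ β ≠ [] ∧
          M.est α = M.est (α ++ β) ∧
          ∀ β' : List O, β' <+: β → 1 < (M.est (α ++ β')).ncard)) : M.SPD := by
  classical
  refine ⟨Nat.card (Set X) + 1, Nat.succ_pos _, ?_⟩
  set N := Nat.card (Set X) with hN
  intro s hLom s' hps'
  obtain ⟨x, hx0, hdel⟩ := hLom
  set n := s'.length with hn
  have hs' : s' = pre s n := eq_pre_of_isPrefixOf hps'
  set γ : ℕ → List O := fun m => M.labelSeq (pre s m) with hγ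
  have hmem : ∀ m, x m ∈ M.est (γ m) :=
    fun m => ⟨x 0, hx0, pre s m, rfl, run_pre M s x hdel m⟩
  have hmono : ∀ {a b : ℕ}, a ≤ b → γ a <+: γ b :=
    fun h => List.IsPrefix.filterMap M.label (pre_prefix s h)
  have hγsucc : ∀ m, γ (m + 1) = γ m ++ M.labelSeq [s m] := by
    intro m
    show M.labelSeq (pre s (m + 1)) = _
    rw [pre_succ, labelSeq_append]
  have hstep : ∀ m, (γ m).length ≤ (γ (m + 1)).length ∧
      (γ (m + 1)).length ≤ (γ m).length + 1 := by
    intro m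
    rw [hγsucc, List.length_append]
    have : (M.labelSeq [s m]).length ≤ 1 := by
      rcases h : M.label (s m) with _ | o <;> simp [FSA.labelSeq, h]
    omega
  have hobs : ∀ m, M.label (s m) ≠ none → (γ m).length + 1 ≤ (γ (m + 1)).length := by
    intro m hm
    rcases h : M.label (s m) with _ | o
    · exact absurd h hm
    · rw [hγsucc, List.length_append]
      simp [FSA.labelSeq, h]
  suffices key : ∃ m, n ≤ m ∧ (γ m).length ≤ (γ n).length + N ∧
      (M.est (γ m)).ncard = 1 by
    obtain ⟨m, hnm, hlen, hcard⟩ := key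
    have hsm : s' ++ (pre s m).drop n = pre s m := by
      rw [hs']
      have ht : pre s n = (pre s m).take n := by
        have hp := pre_prefix s hnm
        rw [List.prefix_iff_eq_take.1 hp, pre_length]
      rw [ht, List.take_append_drop]
    have hlabm : M.labelSeq (s' ++ (pre s m).drop n) = γ m := by rw [hsm]
    have hlab' : M.labelSeq s' = γ n := by rw [hs']
    refine ⟨(pre s m).drop n, ?_, ?_, ?_⟩
    · have h1 := congrArg List.length hlabm
      rw [labelSeq_append, List.length_append, hlab'] at h1
      omega
    · rw [hsm]; exact isPrefixOf_pre s m
    · rw [hlabm]; exact hcard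
  by_cases H : ∃ m, n ≤ m ∧ (γ n).length + N ≤ (γ m).length
  · -- Case A: at least N more observable events occur.
    obtain ⟨M0, hM0, hM0len⟩ := H
    have hex : ∀ j, j ≤ N → ∃ m, n ≤ m ∧ (γ n).length + j ≤ (γ m).length :=
      fun j hj => ⟨M0, hM0, by omega⟩
    let mj : (j : ℕ) → j ≤ N → ℕ := fun j hj => Nat.find (hex j hj)
    have hmj1 : ∀ j hj, n ≤ mj j hj ∧ (γ n).length + j ≤ (γ (mj j hj)).length :=
      fun j hj => Nat.find_spec (hex j hj)
    have hmjlen : ∀ j hj, (γ (mj j hj)).length = (γ n).length + j := by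
      intro j hj
      rcases Nat.lt_or_ge (γ (mj j hj)).length ((γ n).length + j + 1) with h | h
      · have := (hmj1 j hj).2; omega
      · exfalso
        have hgt : n < mj j hj := by
          rcases Nat.lt_or_ge n (mj j hj) with h' | h'
          · exact h'
          · have h2 := (hmj1 j hj).1
            have h3 : mj j hj = n := by omega
            rw [h3] at h
            omega
        have hstep' := (hstep (mj j hj - 1)).2
        have hsub : mj j hj - 1 + 1 = mj j hj := by omega
        rw [hsub] at hstep'
        exact absurd ⟨by omega, by omega⟩ (Nat.find_min (hex j hj) (show mj j hj - 1 < mj j hj by omega))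
    have hmjmono : ∀ j hj j' hj', j ≤ j' → mj j hj ≤ mj j' hj' := by
      intro j hj j' hj' hle
      apply Nat.find_min'
      exact ⟨(hmj1 j' hj').1, by have := (hmj1 j' hj').2; omega⟩
    by_cases hone : ∃ j, ∃ hj : j ≤ N, (M.est (γ (mj j hj))).ncard = 1
    · obtain ⟨j, hj, hcard⟩ := hone
      exact ⟨mj j hj, (hmj1 j hj).1, by rw [hmjlen j hj]; omega, hcard⟩
    · exfalso
      push_neg at hone
      have hbig : ∀ j hj, 1 < (M.est (γ (mj j hj))).ncard := by
        intro j hj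
        have h0 : 0 < (M.est (γ (mj j hj))).ncard :=
          (Set.ncard_pos (Set.toFinite _)).2 ⟨x (mj j hj), hmem _⟩
        have := hone j hj
        omega
      have main : ∀ j1 j2 (hj1 : j1 ≤ N) (hj2 : j2 ≤ N), j1 < j2 →
          M.est (γ (mj j1 hj1)) = M.est (γ (mj j2 hj2)) → False := by
        intro j1 j2 hj1 hj2 hlt heq2
        obtain ⟨β, hβfull⟩ := hmono (hmjmono j1 hj1 j2 hj2 (le_of_lt hlt))
        have hlenβ : (γ (mj j1 hj1)).length + β.length = (γ (mj j2 hj2)).length := by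
          rw [← hβfull, List.length_append]
        have l1 := hmjlen j1 hj1
        have l2 := hmjlen j2 hj2
        have hβne : β ≠ [] := by
          intro h
          rw [h] at hlenβ
          simp at hlenβ
          omega
        refine hC2 ⟨γ (mj j1 hj1), β, ?_, hβne, ?_, ?_⟩
        · rw [hβfull]; exact ⟨x (mj j2 hj2), hmem _⟩
        · rw [hβfull]; exact heq2
        · intro β' hpβ'
          have hb2 : β'.length ≤ β.length := hpβ'.length_le
          have hq : j1 + β.length = j2 := by
            have h9 := hlenβ
            rw [l1, l2] at h9
            omega
          have hjle : j1 + β'.length ≤ N := by omega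
          have hfull1 : γ (mj j1 hj1) ++ β' <+: γ (mj j2 hj2) := by
            obtain ⟨r, hr⟩ := hpβ'
            exact ⟨r, by rw [List.append_assoc, hr, hβfull]⟩
          have hfull2 : γ (mj (j1 + β'.length) hjle) <+: γ (mj j2 hj2) :=
            hmono (hmjmono _ hjle j2 hj2 (by omega))
          have hleneq : (γ (mj j1 hj1) ++ β').length =
              (γ (mj (j1 + β'.length) hjle)).length := by
            rw [List.length_append, l1, hmjlen _ hjle]
            omega
          have heqp : γ (mj j1 hj1) ++ β' = γ (mj (j1 + β'.length) hjle) :=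
            (List.prefix_of_prefix_length_le hfull1 hfull2 (by omega)).eq_of_length hleneq
          rw [heqp]
          exact hbig _ hjle
      haveI : Fintype (Set X) := Set.fintype
      obtain ⟨a, b, hab, hgab⟩ := Fintype.exists_ne_map_eq_of_card_lt
        (fun j : Fin (N + 1) => M.est (γ (mj j.1 (Nat.lt_succ_iff.1 j.isLt))))
        (by rw [Fintype.card_fin, hN, Nat.card_eq_fintype_card]; omega)
      have habv : a.1 ≠ b.1 := fun h => hab (Fin.val_injective h)
      rcases habv.lt_or_gt with h | h
      · exact main a.1 b.1 (Nat.lt_succ_iff.1 a.isLt) (Nat.lt_succ_iff.1 b.isLt) h hgab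
      · exact main b.1 a.1 (Nat.lt_succ_iff.1 b.isLt) (Nat.lt_succ_iff.1 a.isLt) h hgab.symm
  · -- Case B: eventually no more observable events.
    push_neg at H
    have hm0 : ∃ m0, n ≤ m0 ∧ ∀ i, m0 ≤ i → M.label (s i) = none := by
      by_contra hcon
      push_neg at hcon
      have grow : ∀ j, ∃ m, n ≤ m ∧ (γ n).length + j ≤ (γ m).length := by
        intro j
        induction j with
        | zero => exact ⟨n, le_refl n, by omega⟩
        | succ j ih =>
          obtain ⟨m, hm, hlen⟩ := ih
          obtain ⟨i, hi, hobs'⟩ := hcon m hm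
          refine ⟨i + 1, by omega, ?_⟩
          have h1 := hobs i hobs'
          have h2 : (γ m).length ≤ (γ i).length := (hmono hi).length_le
          omega
      obtain ⟨m, hm, hlen⟩ := grow N
      have := H m hm
      omega
    obtain ⟨m0, hnm0, hunobs⟩ := hm0
    have main : ∀ a b, a < b → x (m0 + a) = x (m0 + b) →
        ∃ m, n ≤ m ∧ (γ m).length ≤ (γ n).length + N ∧ (M.est (γ m)).ncard = 1 := by
      intro a b hab hxe
      have hrun : M.Run (x (m0 + a)) ((List.range' (m0 + a) (b - a)).map s) (x (m0 + a)) := by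
        have h1 := run_seg M s x hdel (b - a) (m0 + a)
        have he : m0 + a + (b - a) = m0 + b := by omega
        rw [he, ← hxe] at h1
        exact h1
      have hdne : (List.range' (m0 + a) (b - a)).map s ≠ [] := by
        intro h
        have h2 := congrArg List.length h
        simp at h2
        omega
      have hdun : ∀ t ∈ (List.range' (m0 + a) (b - a)).map s, M.label t = none := by
        intro t ht
        simp only [List.mem_map, List.mem_range'_1] at ht
        obtain ⟨l, hl, rfl⟩ := ht
        exact hunobs l (by omega)
      have hle : ¬ (1 < (M.est (γ (m0 + a))).ncard) := by
        intro hgt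
        exact hC1 ⟨γ (m0 + a), x (m0 + a), hmem _, hgt, x (m0 + a), [],
          (List.range' (m0 + a) (b - a)).map s, ⟨rfl, by simp⟩, hdne, hrun, hdun⟩
      have hpos : 0 < (M.est (γ (m0 + a))).ncard :=
        (Set.ncard_pos (Set.toFinite _)).2 ⟨x (m0 + a), hmem _⟩
      have hml := H (m0 + a) (by omega)
      exact ⟨m0 + a, by omega, by omega, by omega⟩
    obtain ⟨a, b, hab, hxab⟩ := Finite.exists_ne_map_eq_of_infinite (fun i => x (m0 + i))
    rcases hab.lt_or_gt with h | h
    · exact main a b h hxab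
    · exact main b a h hxab.symm

end FSAAux

/-- `S` is not SPD iff (1) there are `γ ∈ 𝓛(S)` and `x ∈ M(S,γ)` with
`|M(S,γ)| > 1` and a transition sequence `x →^{s1} x' →^{s2} x'` with `s1 ∈ (T_uo)*`,
`s2 ∈ (T_uo)^+`, or (2) there are `α, β ∈ Σ*` with `αβ ∈ 𝓛(S)`, `|β| > 0`,
`M(S,α) = M(S,αβ)`, and `|M(S,αβ̄)| > 1` for every prefix `β̄` of `β`. -/
theorem not_spd_iff_lang {X T O : Type} [Fintype X] [Fintype T] [Fintype O]
    (M : FSA X T O) :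
    ¬ M.SPD ↔
      ((∃ (γ : List O) (x : X), x ∈ M.est γ ∧ 1 < (M.est γ).ncard ∧
          ∃ (x' : X) (s1 s2 : List T),
            M.UnobsRun x s1 x' ∧ s2 ≠ [] ∧ M.UnobsRun x' s2 x') ∨
       (∃ α β : List O, (M.est (α ++ β)).Nonempty ∧ β ≠ [] ∧
          M.est α = M.est (α ++ β) ∧
          ∀ β' : List O, β' <+: β → 1 < (M.est (α ++ β')).ncard)) := by
  constructor
  · intro hnspd
    by_contra hcon
    rw [not_or] at hcon
    exact hnspd (FSAAux.spd_of_not M hcon.1 hcon.2)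
  · rintro (⟨γ, x, hx, hcard, x', s1, s2, h1, hs2, h2⟩ | ⟨α, β, hne, hβ, heq, hbig⟩)
    · exact FSAAux.cond1_not_spd M γ x hx hcard x' s1 s2 h1 hs2 h2
    · exact FSAAux.cond2_not_spd M α β hne hβ heq hbig
end

section
/- An FSA S is not strongly periodically detectable if and only if in its observer S_obs at least one of the following holds: (3) there are a reachable state q of S_obs and x∈q such that |q|>1 and there is a transition sequence x→^{s1}x'→^{s2}x' in S for some s1∈(T_uo)*, s2∈(T_uo)^+, x'∈X; (4) there is a reachable transition cycle of S_obs such that no state in the cycle is a singleton. -/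
namespace FSA

variable {X T O : Type}

lemma run_append (M : FSA X T O) {x y : X} (a b : List T) :
    M.Run x (a ++ b) y ↔ ∃ z, M.Run x a z ∧ M.Run z b y := by
  induction a generalizing x with
  | nil =>
    simp only [List.nil_append]
    constructor
    · intro h; exact ⟨x, rfl, h⟩
    · rintro ⟨z, h1, h2⟩; cases h1; exact h2
  | cons t a ih =>
    simp only [List.cons_append, Run]
    constructor
    · rintro ⟨w, hw, hr⟩
      obtain ⟨z, h1, h2⟩ := (ih).1 hr
      exact ⟨z, ⟨w, hw, h1⟩, h2⟩
    · rintro ⟨z, ⟨w, hw, h1⟩, h2⟩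
      exact ⟨w, hw, (ih).2 ⟨z, h1, h2⟩⟩

lemma labelSeq_append (M : FSA X T O) (a b : List T) :
    M.labelSeq (a ++ b) = M.labelSeq a ++ M.labelSeq b :=
  List.filterMap_append

lemma est_nil (M : FSA X T O) : M.est [] = M.obsInit := by
  ext x
  constructor
  · rintro ⟨x0, hx0, s, hl, hr⟩
    exact ⟨x0, hx0, s, hr, by
      intro t ht
      exact (List.filterMap_eq_nil_iff.1 hl) t ht⟩
  · rintro ⟨x0, hx0, s, hr, hu⟩
    exact ⟨x0, hx0, s, List.filterMap_eq_nil_iff.2 hu, hr⟩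

lemma labelSeq_split (M : FSA X T O) {s : List T} {w : List O} {o : O}
    (h : M.labelSeq s = w ++ [o]) :
    ∃ s1 t s2, s = s1 ++ t :: s2 ∧ M.labelSeq s1 = w ∧ M.label t = some o ∧
      ∀ u ∈ s2, M.label u = none := by
  induction s using List.reverseRecOn with
  | nil => simp [labelSeq] at h
  | append_singleton s' u ih =>
    rw [labelSeq_append] at h
    rcases hu : M.label u with _ | o'
    · have h' : M.labelSeq s' = w ++ [o] := by
        simpa [labelSeq, hu] using h
      obtain ⟨s1, t, s2, rfl, h1, h2, h3⟩ := ih h'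
      refine ⟨s1, t, s2 ++ [u], by simp, h1, h2, ?_⟩
      intro v hv
      rcases List.mem_append.1 hv with hv | hv
      · exact h3 v hv
      · simp at hv; subst hv; exact hu
    · have h' : M.labelSeq s' ++ [o'] = w ++ [o] := by
        simpa [labelSeq, hu] using h
      obtain ⟨h1, h2⟩ := List.append_inj' h' (by simp)
      simp at h2; subst h2
      exact ⟨s', u, [], rfl, h1, hu, by simp⟩

lemma est_snoc (M : FSA X T O) (w : List O) (o : O) :
    M.est (w ++ [o]) = M.UR (M.ReachO o (M.est w)) := by
  ext y
  constructor
  · rintro ⟨x0, hx0, s, hl, hr⟩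
    obtain ⟨s1, t, s2, rfl, hl1, ht, hs2⟩ := M.labelSeq_split hl
    obtain ⟨x, hx1, hx2⟩ := (M.run_append s1 (t :: s2)).1 hr
    obtain ⟨z, hd, hz⟩ := hx2
    exact ⟨z, ⟨x, ⟨x0, hx0, s1, hl1, hx1⟩, t, hd, ht⟩, s2, hz, hs2⟩
  · rintro ⟨z, ⟨x, ⟨x0, hx0, s1, hl1, hr1⟩, t, hd, ht⟩, s2, hz, hs2⟩
    refine ⟨x0, hx0, s1 ++ t :: s2, ?_, ?_⟩
    · rw [labelSeq_append, hl1]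
      simp [labelSeq, ht, List.filterMap_eq_nil_iff.2 hs2]
    · exact (M.run_append s1 (t :: s2)).2 ⟨x, hr1, z, hd, hz⟩

lemma obsRun_append (M : FSA X T O) {q q'' : Set X} (a b : List O) :
    M.ObsRun q (a ++ b) q'' ↔ ∃ q', M.ObsRun q a q' ∧ M.ObsRun q' b q'' := by
  induction a generalizing q with
  | nil =>
    simp only [List.nil_append]
    constructor
    · intro h; exact ⟨q, rfl, h⟩
    · rintro ⟨q', h1, h2⟩; cases h1; exact h2
  | cons σ a ih =>
    simp only [List.cons_append, ObsRun]
    constructor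
    · rintro ⟨q1, h1, hr⟩
      obtain ⟨q', h2, h3⟩ := ih.1 hr
      exact ⟨q', ⟨q1, h1, h2⟩, h3⟩
    · rintro ⟨q', ⟨q1, h1, h2⟩, h3⟩
      exact ⟨q1, h1, ih.2 ⟨q', h2, h3⟩⟩

lemma obsRun_est (M : FSA X T O) {w v : List O} {q : Set X}
    (h : M.ObsRun (M.est v) w q) : q = M.est (v ++ w) := by
  induction w generalizing v with
  | nil => rw [List.append_nil]; exact h.symm
  | cons σ w ih =>
    obtain ⟨q1, ⟨hq1, hne⟩, hrest⟩ := h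
    have hq1' : q1 = M.est (v ++ [σ]) := by rw [est_snoc]; exact hq1
    subst hq1'
    have := ih hrest
    simpa [List.append_assoc] using this

lemma obsRun_est' (M : FSA X T O) {w : List O} {q : Set X}
    (h : M.ObsRun M.obsInit w q) : q = M.est w := by
  have := M.obsRun_est (v := []) (by rw [est_nil]; exact h)
  simpa using this

lemma est_prefix_nonempty (M : FSA X T O) {w : List O} {o : O}
    (h : (M.est (w ++ [o])).Nonempty) : (M.est w).Nonempty := by
  obtain ⟨y, x0, hx0, s, hl, hr⟩ := h
  obtain ⟨s1, t, s2, rfl, hl1, ht, hs2⟩ := M.labelSeq_split hl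
  obtain ⟨x, hx1, _⟩ := (M.run_append s1 (t :: s2)).1 hr
  exact ⟨x, x0, hx0, s1, hl1, hx1⟩

lemma est_obsRun (M : FSA X T O) (w : List O) (h : (M.est w).Nonempty) :
    M.ObsRun M.obsInit w (M.est w) := by
  induction w using List.reverseRecOn with
  | nil => rw [est_nil]; rfl
  | append_singleton w o ih =>
    have hw := M.est_prefix_nonempty h
    have h1 := ih hw
    refine (M.obsRun_append w [o]).2 ⟨M.est w, h1, ?_⟩
    exact ⟨M.est (w ++ [o]), ⟨(M.est_snoc w o), h⟩, rfl⟩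

lemma est_reachable (M : FSA X T O) (w : List O) (h : (M.est w).Nonempty) :
    M.ObsReachable (M.est w) := ⟨w, M.est_obsRun w h⟩

end FSA

namespace FSA

variable {X T O : Type}

/-- `j`-fold repetition of a list. -/
def rep {α : Type*} (L : List α) : ℕ → List α
  | 0 => []
  | j + 1 => L ++ rep L j

@[simp] lemma rep_zero {α : Type*} (L : List α) : rep L 0 = [] := rfl
@[simp] lemma rep_succ {α : Type*} (L : List α) (j : ℕ) : rep L (j + 1) = L ++ rep L j := rfl

lemma rep_length {α : Type*} (L : List α) (j : ℕ) : (rep L j).length = j * L.length := by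
  induction j with
  | zero => simp
  | succ j ih => simp [ih, Nat.succ_mul, Nat.add_comm]

lemma rep_getElem {α : Type*} (L : List α) (j i : ℕ) (hi : i < (rep L j).length) :
    (rep L j)[i] = L[i % L.length]'(Nat.mod_lt _ (by
      rcases Nat.eq_zero_or_pos L.length with h | h
      · exfalso; rw [rep_length, h] at hi; omega
      · exact h)) := by
  induction j generalizing i with
  | zero => exfalso; simp at hi
  | succ j ih =>
    have hL : 0 < L.length := by
      rcases Nat.eq_zero_or_pos L.length with h | h
      · exfalso; rw [rep_length, h] at hi; omega
      · exact h
    simp only [rep_succ] at hi ⊢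
    rcases Nat.lt_or_ge i L.length with h | h
    · rw [List.getElem_append_left h]
      congr 1
      exact (Nat.mod_eq_of_lt h).symm
    · rw [List.getElem_append_right h]
      have hi' : i - L.length < (rep L j).length := by
        simp [List.length_append] at hi; omega
      rw [ih (i - L.length) hi']
      congr 1
      exact (Nat.mod_eq_sub_mod h).symm

lemma rep_add {α : Type*} (L : List α) (a b : ℕ) :
    rep L (a + b) = rep L a ++ rep L b := by
  induction a with
  | zero => simp
  | succ a ih => rw [Nat.succ_add, rep_succ, ih, rep_succ, List.append_assoc]

lemma mem_rep {α : Type*} {L : List α} {j : ℕ} {x : α} (h : x ∈ rep L j) : x ∈ L := by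
  induction j with
  | zero => simp at h
  | succ j ih =>
    rw [rep_succ] at h
    rcases List.mem_append.1 h with h | h
    · exact h
    · exact ih h

/-- finite segment `s[a..b)` of an infinite sequence. -/
def seg (s : ℕ → T) (a b : ℕ) : List T := List.ofFn (fun i : Fin (b - a) => s (a + i))

lemma seg_length (s : ℕ → T) (a b : ℕ) : (seg s a b).length = b - a := by
  simp [seg]

lemma seg_getElem (s : ℕ → T) (a b i : ℕ) (h : i < (seg s a b).length) :
    (seg s a b)[i] = s (a + i) := by
  simp [seg]

lemma mem_seg {s : ℕ → T} {a b : ℕ} {t : T} (h : t ∈ seg s a b) :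
    ∃ i, a ≤ i ∧ i < b ∧ t = s i := by
  rw [seg, List.mem_ofFn] at h
  obtain ⟨i, hi⟩ := h
  have hlt : (i : ℕ) < b - a := i.2
  exact ⟨a + i, by omega, by omega, hi.symm⟩

lemma seg_append (s : ℕ → T) {a b c : ℕ} (hab : a ≤ b) (hbc : b ≤ c) :
    seg s a c = seg s a b ++ seg s b c := by
  apply List.ext_getElem
  · simp [seg_length]; omega
  · intro i h1 h2
    rw [seg_getElem]
    rcases Nat.lt_or_ge i (seg s a b).length with h | h
    · rw [List.getElem_append_left h, seg_getElem]
    · rw [List.getElem_append_right h, seg_getElem]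
      congr 1
      rw [seg_length] at h h1 ⊢
      omega

lemma seg_singleton (s : ℕ → T) (a : ℕ) : seg s a (a + 1) = [s a] := by
  apply List.ext_getElem
  · rw [seg_length]; simp
  · intro i h1 h2
    rw [seg_getElem]
    simp at h2
    subst h2
    simp

lemma isPrefixOf_iff {l : List T} {s : ℕ → T} :
    IsPrefixOf l s ↔ l = seg s 0 l.length := by
  constructor
  · intro h
    apply List.ext_getElem
    · simp [seg_length]
    · intro i h1 h2
      rw [seg_getElem]
      have := h ⟨i, h1⟩
      simpa using this
  · intro h i
    have hi : (i : ℕ) < (seg s 0 l.length).length := by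
      rw [seg_length]; simpa using i.2
    calc l.get i = l[(i : ℕ)] := rfl
      _ = (seg s 0 l.length)[(i : ℕ)] := List.getElem_of_eq h _
      _ = s (0 + i) := seg_getElem _ _ _ _ hi
      _ = s i := by rw [Nat.zero_add]

lemma run_states (M : FSA X T O) {x y : X} {l : List T} (h : M.Run x l y) :
    ∃ f : ℕ → X, f 0 = x ∧ f l.length = y ∧
      ∀ i (hi : i < l.length), M.delta (f i) (l[i]'hi) (f (i + 1)) := by
  induction l generalizing x with
  | nil => exact ⟨fun _ => x, rfl, h ▸ rfl, by intro i hi; simp at hi⟩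
  | cons t l ih =>
    obtain ⟨z, hd, hr⟩ := h
    obtain ⟨f, hf0, hfl, hfs⟩ := ih hr
    refine ⟨fun i => match i with | 0 => x | i + 1 => f i, rfl, hfl, ?_⟩
    intro i hi
    match i with
    | 0 => simpa [hf0] using hd
    | i + 1 => exact hfs i (by simpa using hi)

lemma run_snoc (M : FSA X T O) {x z y : X} {l : List T} {t : T}
    (h1 : M.Run x l z) (h2 : M.delta z t y) : M.Run x (l ++ [t]) y :=
  (M.run_append l [t]).2 ⟨z, h1, ⟨y, h2, rfl⟩⟩

lemma run_seg (M : FSA X T O) {xf : ℕ → X} {s : ℕ → T}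
    (hd : ∀ i, M.delta (xf i) (s i) (xf (i + 1))) :
    ∀ d a, M.Run (xf a) (seg s a (a + d)) (xf (a + d)) := by
  intro d a
  induction d with
  | zero =>
    show M.Run (xf a) (seg s a (a + 0)) (xf (a + 0))
    have h0 : seg s a (a + 0) = [] := List.length_eq_zero_iff.1 (by rw [seg_length]; omega)
    rw [h0]; rfl
  | succ d ih =>
    have hseg : seg s a (a + (d + 1)) = seg s a (a + d) ++ [s (a + d)] := by
      rw [seg_append s (by omega : a ≤ a + d) (by omega : a + d ≤ a + (d + 1))]
      congr 1
      have : a + (d + 1) = (a + d) + 1 := by omega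
      rw [this, seg_singleton]
    rw [hseg]
    have : a + (d + 1) = (a + d) + 1 := by omega
    rw [this]
    exact M.run_snoc ih (hd (a + d))

lemma run_seg' (M : FSA X T O) {xf : ℕ → X} {s : ℕ → T}
    (hd : ∀ i, M.delta (xf i) (s i) (xf (i + 1))) {a b : ℕ} (hab : a ≤ b) :
    M.Run (xf a) (seg s a b) (xf b) := by
  have := M.run_seg hd (b - a) a
  rwa [Nat.add_sub_cancel' hab] at this

end FSA

namespace FSA

variable {X T O : Type}

lemma succ_mod (a m : ℕ) : (a + 1) % m = (a % m + 1) % m := by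
  conv_lhs => rw [← Nat.mod_add_div a m, Nat.add_right_comm, Nat.add_mul_mod_self_left]

lemma loop_lemma (M : FSA X T O) {x0 xs : X} {s0 L : List T}
    (h0 : x0 ∈ M.init) (hr0 : M.Run x0 s0 xs) (hrL : M.Run xs L xs) (hL : L ≠ []) :
    ∃ sInf : ℕ → T, M.InLomega sInf ∧ IsPrefixOf s0 sInf ∧
      ∀ s'' : List T, IsPrefixOf (s0 ++ s'') sInf → ∃ j : ℕ, s'' <+: rep L j := by
  set n0 := s0.length with hn0
  set m := L.length with hm0
  have hm : 0 < m := List.length_pos_iff.2 hL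
  obtain ⟨f0, hf00, hf0n, hf0s⟩ := M.run_states hr0
  obtain ⟨fL, hfL0, hfLm, hfLs⟩ := M.run_states hrL
  set sInf : ℕ → T := fun i => if h : i < n0 then s0[i]'h else L[(i - n0) % m]'(Nat.mod_lt _ hm)
    with hsInf
  set xfInf : ℕ → X := fun i => if i < n0 then f0 i else fL ((i - n0) % m) with hxfInf
  have hfLstep : ∀ r, fL ((r + 1) % m) = fL (r % m + 1) := by
    intro r
    rw [succ_mod]
    by_cases h : r % m + 1 = m
    · rw [h, Nat.mod_self, hfL0, ← hfLm]
    · rw [Nat.mod_eq_of_lt (by have := Nat.mod_lt r hm; omega)]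
  have hdelta : ∀ i, M.delta (xfInf i) (sInf i) (xfInf (i + 1)) := by
    intro i
    by_cases h : i < n0
    · have hx : xfInf i = f0 i := if_pos h
      have hs : sInf i = s0[i]'h := dif_pos h
      by_cases h' : i + 1 < n0
      · have hx' : xfInf (i + 1) = f0 (i + 1) := if_pos h'
        rw [hx, hs, hx']
        exact hf0s i h
      · have hin : i + 1 = n0 := by omega
        have hx' : xfInf (i + 1) = fL ((i + 1 - n0) % m) := if_neg h'
        have hfix : fL ((i + 1 - n0) % m) = f0 (i + 1) := by
          rw [hin, Nat.sub_self, Nat.zero_mod, hfL0, ← hf0n]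
        rw [hx, hs, hx', hfix]
        exact hf0s i h
    · have hx : xfInf i = fL ((i - n0) % m) := if_neg h
      have hs : sInf i = L[(i - n0) % m]'(Nat.mod_lt _ hm) := dif_neg h
      have hx' : xfInf (i + 1) = fL ((i + 1 - n0) % m) := if_neg (by omega)
      have he : i + 1 - n0 = (i - n0) + 1 := by omega
      rw [hx, hs, hx', he, hfLstep (i - n0)]
      exact hfLs ((i - n0) % m) (Nat.mod_lt _ hm)
  refine ⟨sInf, ⟨xfInf, ?_, hdelta⟩, ?_, ?_⟩
  · -- initial state
    by_cases h : 0 < n0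
    · have : xfInf 0 = f0 0 := if_pos h
      rw [this, hf00]; exact h0
    · have hs0 : s0 = [] := List.length_eq_zero_iff.1 (by omega)
      have hxs : x0 = xs := by rw [hs0] at hr0; exact hr0
      have : xfInf 0 = fL 0 := by
        have : xfInf 0 = fL ((0 - n0) % m) := if_neg (by omega)
        simpa using this
      rw [this, hfL0, ← hxs]; exact h0
  · -- IsPrefixOf s0 sInf
    intro i
    have hi : (i : ℕ) < n0 := i.2
    show s0.get i = sInf i
    rw [hsInf]
    simp only [dif_pos hi]
    rfl
  · -- prefix property
    intro s'' hpre
    set len := n0 + s''.length with hlen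
    set j := s''.length with hj
    refine ⟨j, (List.prefix_append_right_inj s0).1 ?_⟩
    have hBlen : (s0 ++ rep L j).length = n0 + j * m := by
      rw [List.length_append, rep_length]
    have hjm : len ≤ n0 + j * m := by
      have : j ≤ j * m := Nat.le_mul_of_pos_right j hm
      omega
    have hBget : ∀ i (h : i < (s0 ++ rep L j).length), (s0 ++ rep L j)[i] = sInf i := by
      intro i h
      by_cases hi : i < n0
      · rw [List.getElem_append_left hi, hsInf]
        simp only [dif_pos hi]
      · rw [List.getElem_append_right (by omega : s0.length ≤ i)]
        rw [rep_getElem L j (i - s0.length) (by rw [hBlen] at h; rw [rep_length, ← hm0]; omega)]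
        rw [hsInf]
        simp only [dif_neg hi]
        rfl
    have hA : ∀ i (h : i < (s0 ++ s'').length), (s0 ++ s'')[i] = sInf i := by
      intro i h
      exact hpre ⟨i, h⟩
    have hAlen : (s0 ++ s'').length = len := by rw [List.length_append]
    have heq : s0 ++ s'' = (s0 ++ rep L j).take len := by
      apply List.ext_getElem
      · rw [hAlen, List.length_take]; omega
      · intro i h1 h2
        rw [List.getElem_take, hA i h1, hBget i (by rw [List.length_take] at h2; omega)]
    rw [heq]
    exact List.take_prefix _ _

end FSA

namespace FSA

variable {X T O : Type}

lemma labelSeq_rep (M : FSA X T O) (l : List T) (j : ℕ) :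
    M.labelSeq (rep l j) = rep (M.labelSeq l) j := by
  induction j with
  | zero => simp [labelSeq]
  | succ j ih => rw [rep_succ, labelSeq_append, ih, rep_succ]

lemma rep_rep {α : Type*} (L : List α) (d j : ℕ) :
    rep (rep L d) j = rep L (j * d) := by
  induction j with
  | zero => simp
  | succ j ih => rw [rep_succ, ih, Nat.succ_mul, Nat.add_comm, rep_add]

lemma cond3_not_spd (M : FSA X T O)
    (h : ∃ q : Set X, M.ObsReachable q ∧ 1 < q.ncard ∧
        ∃ x ∈ q, ∃ (x' : X) (s1 s2 : List T),
          M.UnobsRun x s1 x' ∧ s2 ≠ [] ∧ M.UnobsRun x' s2 x') : ¬ M.SPD := by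
  obtain ⟨q, ⟨w, hw⟩, hq, x, hxq, x', s1, s2, ⟨hr1, hu1⟩, hs2ne, ⟨hr2, hu2⟩⟩ := h
  have hq_est : q = M.est w := M.obsRun_est' hw
  have hx_est : x ∈ M.est w := hq_est ▸ hxq
  obtain ⟨x0, hx0, sx, hlx, hrx⟩ := hx_est
  rintro ⟨k, hk, hspd⟩
  have hr0 : M.Run x0 (sx ++ s1) x' := (M.run_append _ _).2 ⟨x, hrx, hr1⟩
  obtain ⟨sInf, hIn, hpre0, hpre⟩ := M.loop_lemma hx0 hr0 hr2 hs2ne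
  obtain ⟨s'', hlen, hps, hcard⟩ := hspd sInf hIn (sx ++ s1) hpre0
  obtain ⟨j, hj⟩ := hpre s'' hps
  have hu'' : ∀ t ∈ s'', M.label t = none := by
    intro t ht
    exact hu2 t (mem_rep (hj.subset ht))
  have hl : M.labelSeq ((sx ++ s1) ++ s'') = w := by
    rw [labelSeq_append, labelSeq_append, hlx]
    simp [labelSeq, List.filterMap_eq_nil_iff.2 hu1, List.filterMap_eq_nil_iff.2 hu'']
  rw [hl, ← hq_est] at hcard
  omega

lemma cycle_back_aux (M : FSA X T O) {n : ℕ} {q : Fin (n + 1) → Set X} {σ : Fin n → O}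
    (hstep : ∀ i : Fin n, M.obsTrans (q i.castSucc) (σ i) (q i.succ)) :
    ∀ (i : Fin (n + 1)) (y : X), y ∈ q i → ∃ x ∈ q 0, ∃ s : List T,
      M.Run x s y ∧ M.labelSeq s = (List.ofFn σ).take i := by
  intro i
  induction i using Fin.induction with
  | zero => intro y hy; exact ⟨y, hy, [], rfl, by simp [labelSeq]⟩
  | succ i ih =>
    intro y hy
    obtain ⟨hq', _⟩ := hstep i
    rw [hq'] at hy
    obtain ⟨z, ⟨x1, hx1, t, hd, ht⟩, su, hru, hu⟩ := hy
    obtain ⟨x, hx0, s, hrs, hls⟩ := ih x1 hx1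
    refine ⟨x, hx0, s ++ t :: su, ?_, ?_⟩
    · exact (M.run_append _ _).2 ⟨x1, hrs, z, hd, hru⟩
    · rw [labelSeq_append, hls]
      have h1 : M.labelSeq (t :: su) = [σ i] := by
        simp [labelSeq, ht, List.filterMap_eq_nil_iff.2 hu]
      rw [h1]
      rw [Fin.val_succ, List.take_succ]
      congr 1
      have hlt : (i : ℕ) < (List.ofFn σ).length := by simpa using i.2
      rw [List.getElem?_eq_getElem hlt, List.getElem_ofFn]
      simp

lemma cycle_obsRun (M : FSA X T O) {n : ℕ} (hn : 0 < n) {q : Fin (n + 1) → Set X}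
    {σ : Fin n → O}
    (hstep : ∀ i : Fin n, M.obsTrans (q i.castSucc) (σ i) (q i.succ))
    (hq0 : q 0 = q (Fin.last n)) {v : List O} {N : ℕ}
    (hv : v <+: rep (List.ofFn σ) N) :
    M.ObsRun (q 0) v (q ⟨v.length % n, Nat.lt_succ_of_lt (Nat.mod_lt _ hn)⟩) := by
  have hrlen : (rep (List.ofFn σ) N).length = N * n := by
    rw [rep_length, List.length_ofFn]
  have key : ∀ m, m ≤ N * n →
      M.ObsRun (q 0) ((rep (List.ofFn σ) N).take m)
        (q ⟨m % n, Nat.lt_succ_of_lt (Nat.mod_lt _ hn)⟩) := by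
    intro m
    induction m with
    | zero =>
      intro _
      show q 0 = _
      exact congrArg q (Fin.ext (by simp))
    | succ m ih =>
      intro hm
      have hmlt : m < (rep (List.ofFn σ) N).length := by rw [hrlen]; omega
      have htake : (rep (List.ofFn σ) N).take (m + 1) =
          (rep (List.ofFn σ) N).take m ++ [σ ⟨m % n, Nat.mod_lt _ hn⟩] := by
        rw [List.take_succ, List.getElem?_eq_getElem hmlt]
        congr 1
        rw [rep_getElem]
        simp only [List.length_ofFn]
        rw [List.getElem_ofFn]
        simp
      rw [htake]
      refine (M.obsRun_append _ _).2 ⟨_, ih (by omega), ?_⟩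
      set i : Fin n := ⟨m % n, Nat.mod_lt _ hn⟩ with hi
      refine ⟨q ⟨(m + 1) % n, Nat.lt_succ_of_lt (Nat.mod_lt _ hn)⟩, ?_, rfl⟩
      have e1 : (i.castSucc : Fin (n + 1)) = ⟨m % n, Nat.lt_succ_of_lt (Nat.mod_lt _ hn)⟩ :=
        Fin.ext rfl
      have e2 : q i.succ = q ⟨(m + 1) % n, Nat.lt_succ_of_lt (Nat.mod_lt _ hn)⟩ := by
        by_cases hc : m % n + 1 = n
        · have h1 : (m + 1) % n = 0 := by
            rw [succ_mod, hc, Nat.mod_self]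
          have h2 : (i.succ : Fin (n + 1)) = Fin.last n := Fin.ext (by simp [hi, hc])
          have h3 : (⟨(m + 1) % n, Nat.lt_succ_of_lt (Nat.mod_lt _ hn)⟩ : Fin (n + 1)) = 0 :=
            Fin.ext (by simp [h1])
          rw [h2, h3, ← hq0]
        · have h1 : (m + 1) % n = m % n + 1 := by
            rw [succ_mod]
            exact Nat.mod_eq_of_lt (by have := Nat.mod_lt m hn; omega)
          have h2 : (i.succ : Fin (n + 1)) = ⟨(m + 1) % n, Nat.lt_succ_of_lt (Nat.mod_lt _ hn)⟩ :=
            Fin.ext (by simp [hi, h1])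
          rw [h2]
      have := hstep i
      rw [e1, e2] at this
      exact this
  have hvlen : v.length ≤ N * n := by
    have := hv.length_le
    rwa [hrlen] at this
  have hveq : v = (rep (List.ofFn σ) N).take v.length := List.prefix_iff_eq_take.1 hv
  conv_lhs => rw [hveq]
  exact key v.length hvlen

lemma cond4_not_spd [Finite X] (M : FSA X T O)
    (h : ∃ (n : ℕ), 0 < n ∧ ∃ (q : Fin (n + 1) → Set X) (σ : Fin n → O),
        M.ObsReachable (q 0) ∧ q 0 = q (Fin.last n) ∧
        (∀ i : Fin n, M.obsTrans (q i.castSucc) (σ i) (q i.succ)) ∧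
        ∀ i : Fin (n + 1), (q i).ncard ≠ 1) : ¬ M.SPD := by
  obtain ⟨n, hn, q, σ, ⟨w0, hw0⟩, hq0, hstep, hcard⟩ := h
  have hq0_est : q 0 = M.est w0 := M.obsRun_est' hw0
  have hne0 : (q 0).Nonempty := by
    rw [hq0]
    have h2 := (hstep ⟨n - 1, by omega⟩).2
    have hsucc : ((⟨n - 1, by omega⟩ : Fin n).succ : Fin (n + 1)) = Fin.last n :=
      Fin.ext (by simp; omega)
    rwa [hsucc] at h2
  have hback : ∀ y, y ∈ q 0 → ∃ x, x ∈ q 0 ∧ ∃ s, M.Run x s y ∧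
      M.labelSeq s = List.ofFn σ := by
    intro y hy
    have hy' : y ∈ q (Fin.last n) := hq0 ▸ hy
    obtain ⟨x, hx, s, hr, hl⟩ := M.cycle_back_aux hstep (Fin.last n) y hy'
    refine ⟨x, hx, s, hr, ?_⟩
    rw [hl, Fin.val_last]
    exact List.take_of_length_le (by simp)
  choose f hmem g hrun hlab using hback
  obtain ⟨y0, hy0⟩ := hne0
  let Zs : ℕ → {x // x ∈ q 0} := fun m =>
    Nat.rec ⟨y0, hy0⟩ (fun _ p => ⟨f p.1 p.2, hmem p.1 p.2⟩) m
  set Z : ℕ → X := fun m => (Zs m).1 with hZ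
  have hZmem : ∀ m, Z m ∈ q 0 := fun m => (Zs m).2
  have hZrun : ∀ m, ∃ s, M.Run (Z (m + 1)) s (Z m) ∧ M.labelSeq s = List.ofFn σ :=
    fun m => ⟨g (Zs m).1 (Zs m).2, hrun _ _, hlab _ _⟩
  have hcomp : ∀ d a, ∃ s, M.Run (Z (a + d)) s (Z a) ∧
      M.labelSeq s = rep (List.ofFn σ) d := by
    intro d
    induction d with
    | zero => intro a; exact ⟨[], rfl, by simp [labelSeq]⟩
    | succ d ih =>
      intro a
      obtain ⟨s1, hr1, hl1⟩ := hZrun (a + d)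
      obtain ⟨s2, hr2, hl2⟩ := ih a
      refine ⟨s1 ++ s2, ?_, ?_⟩
      · have he : a + (d + 1) = (a + d) + 1 := by omega
        rw [he]
        exact (M.run_append _ _).2 ⟨Z (a + d), hr1, hr2⟩
      · rw [labelSeq_append, hl1, hl2, rep_succ]
  obtain ⟨m1, m2, hnem, heqm⟩ := Finite.exists_ne_map_eq_of_infinite Z
  obtain ⟨a, b, hab, hZab⟩ : ∃ a b, a < b ∧ Z a = Z b := by
    rcases hnem.lt_or_gt with hlt | hlt
    · exact ⟨m1, m2, hlt, heqm⟩
    · exact ⟨m2, m1, hlt, heqm.symm⟩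
  obtain ⟨sL, hrL, hlL⟩ := hcomp (b - a) a
  rw [Nat.add_sub_cancel' hab.le, ← hZab] at hrL
  have hLne : sL ≠ [] := by
    intro hc
    rw [hc] at hlL
    have h1 : (rep (List.ofFn σ) (b - a)).length = (b - a) * n := by
      rw [rep_length, List.length_ofFn]
    have h2 : (M.labelSeq ([] : List T)).length = 0 := by simp [labelSeq]
    rw [hlL] at h2
    rw [h1] at h2
    have : 0 < (b - a) * n := Nat.mul_pos (by omega) hn
    omega
  have hxstar : Z a ∈ M.est w0 := hq0_est ▸ hZmem a
  obtain ⟨x0, hx0, sx, hlx, hrx⟩ := hxstar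
  rintro ⟨k, hk, hspd⟩
  obtain ⟨sInf, hIn, hpre0, hpre⟩ := M.loop_lemma hx0 hrx hrL hLne
  obtain ⟨s'', hlen, hps, hcard1⟩ := hspd sInf hIn sx hpre0
  obtain ⟨j, hj⟩ := hpre s'' hps
  have hv : M.labelSeq s'' <+: rep (List.ofFn σ) (j * (b - a)) := by
    have h1 : M.labelSeq s'' <+: M.labelSeq (rep sL j) := List.IsPrefix.filterMap _ hj
    rwa [labelSeq_rep, hlL, rep_rep] at h1
  have hobs := M.cycle_obsRun hn hstep hq0 hv
  have hobs' : M.ObsRun M.obsInit (w0 ++ M.labelSeq s'')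
      (q ⟨(M.labelSeq s'').length % n, Nat.lt_succ_of_lt (Nat.mod_lt _ hn)⟩) :=
    (M.obsRun_append _ _).2 ⟨q 0, hw0, hobs⟩
  have hest := M.obsRun_est' hobs'
  have hll : M.labelSeq (sx ++ s'') = w0 ++ M.labelSeq s'' := by
    rw [labelSeq_append, hlx]
  rw [hll, ← hest] at hcard1
  exact hcard _ hcard1

end FSA

namespace FSA

variable {X T O : Type}

lemma labelSeq_single_len (M : FSA X T O) (t : T) : (M.labelSeq [t]).length ≤ 1 := by
  simp only [labelSeq, List.filterMap_cons, List.filterMap_nil]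
  cases M.label t <;> simp

lemma labelSeq_single_none (M : FSA X T O) {t : T} (h : M.labelSeq [t] = []) :
    M.label t = none := by
  simp only [labelSeq, List.filterMap_cons, List.filterMap_nil] at h
  cases hc : M.label t
  · rfl
  · rw [hc] at h; simp at h

lemma spd_of_not_conds [Fintype X] (M : FSA X T O)
    (h3 : ¬ (∃ q : Set X, M.ObsReachable q ∧ 1 < q.ncard ∧
          ∃ x ∈ q, ∃ (x' : X) (s1 s2 : List T),
            M.UnobsRun x s1 x' ∧ s2 ≠ [] ∧ M.UnobsRun x' s2 x'))
    (h4 : ¬ (∃ (n : ℕ), 0 < n ∧ ∃ (q : Fin (n + 1) → Set X) (σ : Fin n → O),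
          M.ObsReachable (q 0) ∧ q 0 = q (Fin.last n) ∧
          (∀ i : Fin n, M.obsTrans (q i.castSucc) (σ i) (q i.succ)) ∧
          ∀ i : Fin (n + 1), (q i).ncard ≠ 1)) : M.SPD := by
  classical
  set K := Fintype.card (Set X) with hK
  refine ⟨K + 1, by omega, ?_⟩
  intro s hIn s' hpre
  obtain ⟨xf, hxf0, hxfd⟩ := hIn
  set n0 := s'.length with hn0
  have hs' : s' = seg s 0 n0 := isPrefixOf_iff.1 hpre
  set w : ℕ → List O := fun j => M.labelSeq (seg s 0 j) with hw
  set c : ℕ → ℕ := fun j => (w j).length with hc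
  have hw_app : ∀ a b : ℕ, a ≤ b → w b = w a ++ M.labelSeq (seg s a b) := by
    intro a b hab
    show M.labelSeq (seg s 0 b) = M.labelSeq (seg s 0 a) ++ _
    rw [seg_append s (Nat.zero_le a) hab, labelSeq_append]
  have hc_mono : ∀ a b : ℕ, a ≤ b → c a ≤ c b := by
    intro a b hab
    show (w a).length ≤ (w b).length
    rw [hw_app a b hab, List.length_append]
    omega
  have hseg_step : ∀ j : ℕ, seg s j (j + 1) = [s j] := fun j => seg_singleton s j
  have hc_step : ∀ j : ℕ, c (j + 1) = c j + (M.labelSeq [s j]).length := by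
    intro j
    show (w (j + 1)).length = (w j).length + _
    rw [hw_app j (j + 1) (by omega), hseg_step j, List.length_append]
  have hc_step1 : ∀ j : ℕ, c (j + 1) ≤ c j + 1 := by
    intro j
    have := M.labelSeq_single_len (s j)
    have := hc_step j
    omega
  have hmem : ∀ j : ℕ, xf j ∈ M.est (w j) :=
    fun j => ⟨xf 0, hxf0, seg s 0 j, rfl, M.run_seg' hxfd (Nat.zero_le j)⟩
  have hEne : ∀ j : ℕ, (M.est (w j)).Nonempty := fun j => ⟨xf j, hmem j⟩
  set S : ℕ → Set ℕ := fun d => {j | n0 ≤ j ∧ c n0 + d ≤ c j} with hS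
  set J : ℕ → ℕ := fun d => sInf (S d) with hJ
  have hJprop : ∀ d, (S d).Nonempty → n0 ≤ J d ∧ c (J d) = c n0 + d := by
    intro d hd
    have hmem' : J d ∈ S d := Nat.sInf_mem hd
    obtain ⟨h1, h2⟩ := hmem'
    refine ⟨h1, ?_⟩
    by_contra hne
    have hgt : c n0 + d < c (J d) := by omega
    have hJpos : n0 < J d := by
      rcases Nat.lt_or_ge n0 (J d) with h | h
      · exact h
      · exfalso
        have he : J d = n0 := by omega
        rw [he] at hgt
        omega
    have hstep1 : c (J d) ≤ c (J d - 1) + 1 := by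
      have := hc_step1 (J d - 1)
      have he : J d - 1 + 1 = J d := by omega
      rwa [he] at this
    have hin : J d - 1 ∈ S d := ⟨by omega, by omega⟩
    have hle2 : J d ≤ J d - 1 := Nat.sInf_le hin
    omega
  have hJle : ∀ d1 d2 : ℕ, d1 ≤ d2 → (S d2).Nonempty → J d1 ≤ J d2 := by
    intro d1 d2 hd12 hd2
    have hmem2 : J d2 ∈ S d2 := Nat.sInf_mem hd2
    have hin : J d2 ∈ S d1 := ⟨hmem2.1, by have := hmem2.2; omega⟩
    exact Nat.sInf_le hin
  have ho : ∀ d : ℕ, (S d).Nonempty → (S (d + 1)).Nonempty →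
      ∃ o : O, w (J (d + 1)) = w (J d) ++ [o] := by
    intro d hd hd1
    have hle := hJle d (d + 1) (by omega) hd1
    have h1 := hJprop d hd
    have h2 := hJprop (d + 1) hd1
    have hpref : w (J d) <+: w (J (d + 1)) := by
      rw [hw_app (J d) (J (d + 1)) hle]
      exact List.prefix_append _ _
    obtain ⟨r, hr⟩ := hpref
    have hrlen : r.length = 1 := by
      have := congrArg List.length hr
      rw [List.length_append] at this
      show r.length = 1
      have e1 : (w (J d)).length = c n0 + d := h1.2
      have e2 : (w (J (d + 1))).length = c n0 + (d + 1) := h2.2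
      omega
    obtain ⟨o, ho⟩ := List.length_eq_one_iff.1 hrlen
    exact ⟨o, by rw [← hr, ho]⟩
  -- the "success" construction
  have hfinish : ∀ d : ℕ, d < K + 1 → (S d).Nonempty → (M.est (w (J d))).ncard = 1 →
      ∃ s'' : List T, (M.labelSeq s'').length < K + 1 ∧ IsPrefixOf (s' ++ s'') s ∧
        (M.est (M.labelSeq (s' ++ s''))).ncard = 1 := by
    intro d hdK hd hcard
    obtain ⟨hJn0, hJc⟩ := hJprop d hd
    refine ⟨seg s n0 (J d), ?_, ?_, ?_⟩
    · have := hw_app n0 (J d) hJn0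
      have hlen := congrArg List.length this
      rw [List.length_append] at hlen
      have e1 : (w (J d)).length = c n0 + d := hJc
      have e2 : (w n0).length = c n0 := rfl
      omega
    · have he : s' ++ seg s n0 (J d) = seg s 0 (J d) := by
        rw [hs']
        exact (seg_append s (Nat.zero_le n0) hJn0).symm
      rw [he]
      apply isPrefixOf_iff.2
      have hlen : (seg s 0 (J d)).length = J d := by rw [seg_length]; omega
      rw [hlen]
    · have he : s' ++ seg s n0 (J d) = seg s 0 (J d) := by
        rw [hs']
        exact (seg_append s (Nat.zero_le n0) hJn0).symm
      rw [he]
      exact hcard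
  by_cases hA : ∃ j, n0 ≤ j ∧ c n0 + K ≤ c j
  · -- Case A: at least K more outputs occur
    have hattain : ∀ d, d ≤ K → (S d).Nonempty := by
      intro d hd
      obtain ⟨j, hj1, hj2⟩ := hA
      exact ⟨j, hj1, by omega⟩
    by_cases hsing : ∃ d, d ≤ K ∧ (M.est (w (J d))).ncard = 1
    · obtain ⟨d, hd, hcard⟩ := hsing
      exact hfinish d (by omega) (hattain d hd) hcard
    · exfalso
      push_neg at hsing
      apply h4
      have hooex : ∀ d : ℕ, d < K → ∃ o : O, w (J (d + 1)) = w (J d) ++ [o] :=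
        fun d hd => ho d (hattain d (by omega)) (hattain (d + 1) (by omega))
      choose oo hoo using hooex
      obtain ⟨d1, d2, hdne, hdeq⟩ := Fintype.exists_ne_map_eq_of_card_lt
        (fun d : Fin (K + 1) => M.est (w (J (d : ℕ)))) (by simp [hK])
      obtain ⟨a, b, hab, habeq⟩ : ∃ a b : Fin (K + 1), (a : ℕ) < (b : ℕ) ∧
          M.est (w (J (a : ℕ))) = M.est (w (J (b : ℕ))) := by
        rcases (Fin.val_ne_iff.2 hdne).lt_or_gt with h | h
        · exact ⟨d1, d2, h, hdeq⟩
        · exact ⟨d2, d1, h, hdeq.symm⟩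
      set nn : ℕ := (b : ℕ) - (a : ℕ) with hnn
      refine ⟨nn, by omega, fun i => M.est (w (J ((a : ℕ) + (i : ℕ)))),
        fun i => oo ((a : ℕ) + (i : ℕ)) (by have hb := b.2; have hi := i.2; omega), ?_, ?_, ?_, ?_⟩
      · show M.ObsReachable (M.est (w (J ((a : ℕ) + (0 : Fin (nn + 1)) : ℕ))))
        have h0 : ((0 : Fin (nn + 1)) : ℕ) = 0 := rfl
        rw [h0, Nat.add_zero]
        exact M.est_reachable _ (hEne _)
      · have h0 : ((0 : Fin (nn + 1)) : ℕ) = 0 := rfl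
        have hl : ((Fin.last nn) : ℕ) = nn := rfl
        simp only [h0, hl, Nat.add_zero]
        have he : (a : ℕ) + nn = (b : ℕ) := by omega
        rw [he]
        exact habeq
      · intro i
        have hi := i.2
        have hb := b.2
        have hcs : ((i.castSucc : Fin (nn + 1)) : ℕ) = (i : ℕ) := rfl
        have hsc : ((i.succ : Fin (nn + 1)) : ℕ) = (i : ℕ) + 1 := rfl
        simp only [hcs, hsc]
        have hd : (a : ℕ) + (i : ℕ) < K := by omega
        constructor
        · have he : (a : ℕ) + ((i : ℕ) + 1) = ((a : ℕ) + (i : ℕ)) + 1 := by omega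
          rw [he, hoo ((a : ℕ) + (i : ℕ)) hd, est_snoc]
        · have he : (a : ℕ) + ((i : ℕ) + 1) = ((a : ℕ) + (i : ℕ)) + 1 := by omega
          rw [he]
          exact hEne _
      · intro i
        have hi := i.2
        have hb := b.2
        exact hsing ((a : ℕ) + (i : ℕ)) (by omega)
  · -- Case B: outputs stop early
    push_neg at hA
    have hstab : ∃ j1, n0 ≤ j1 ∧ ∀ j, j1 ≤ j → c j = c j1 := by
      by_contra hcon
      push_neg at hcon
      have grow : ∀ i : ℕ, ∃ j, n0 ≤ j ∧ c n0 + i ≤ c j := by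
        intro i
        induction i with
        | zero => exact ⟨n0, le_refl _, by omega⟩
        | succ i ih =>
          obtain ⟨j, hj1, hj2⟩ := ih
          obtain ⟨j', hj'1, hj'2⟩ := hcon j hj1
          have hmono := hc_mono j j' hj'1
          exact ⟨j', by omega, by omega⟩
      obtain ⟨j, hj1, hj2⟩ := grow K
      exact absurd (hA j hj1) (by omega)
    obtain ⟨j1, hj1n0, hj1stab⟩ := hstab
    have hcj1 : c n0 ≤ c j1 := hc_mono n0 j1 hj1n0
    set D : ℕ := c j1 - c n0 with hD
    have hDK : D < K := by have := hA j1 hj1n0; omega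
    have hattain : ∀ d, d ≤ D → (S d).Nonempty := fun d hd => ⟨j1, hj1n0, by omega⟩
    by_cases hsing : ∃ d, d ≤ D ∧ (M.est (w (J d))).ncard = 1
    · obtain ⟨d, hd, hcard⟩ := hsing
      exact hfinish d (by omega) (hattain d hd) hcard
    · exfalso
      push_neg at hsing
      apply h3
      -- the estimate at j1
      have hJD : J D ≤ j1 := by
        have hin : j1 ∈ S D := ⟨hj1n0, by omega⟩
        exact Nat.sInf_le hin
      obtain ⟨hJn0, hJc⟩ := hJprop D (hattain D (le_refl _))
      have hEeq : M.est (w (J D)) = M.est (w j1) := by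
        have hpref : w (J D) <+: w j1 := by
          rw [hw_app (J D) j1 hJD]
          exact List.prefix_append _ _
        have hleq : (w (J D)).length = (w j1).length := by
          have e1 : (w (J D)).length = c n0 + D := hJc
          have e2 : (w j1).length = c j1 := rfl
          omega
        rw [hpref.eq_of_length hleq]
      have hqcard : 1 < (M.est (w j1)).ncard := by
        have h1 : (M.est (w j1)).ncard ≠ 1 := by
          rw [← hEeq]
          exact hsing D (le_refl _)
        have h2 : 0 < (M.est (w j1)).ncard :=
          (Set.ncard_pos (Set.toFinite _)).2 (hEne j1)
        omega
      -- all events after j1 are unobservable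
      have hunobs : ∀ j, j1 ≤ j → M.label (s j) = none := by
        intro j hj
        apply M.labelSeq_single_none
        have h1 := hc_step j
        have h2 := hj1stab j hj
        have h3 := hj1stab (j + 1) (by omega)
        have : (M.labelSeq [s j]).length = 0 := by omega
        exact List.length_eq_zero_iff.1 this
      -- repeated state in the unobservable tail
      obtain ⟨i1, i2, hine, hieq⟩ :=
        Finite.exists_ne_map_eq_of_infinite (fun i : ℕ => xf (j1 + i))
      obtain ⟨a, b, hab, habeq⟩ : ∃ a b : ℕ, a < b ∧ xf (j1 + a) = xf (j1 + b) := by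
        rcases hine.lt_or_gt with h | h
        · exact ⟨i1, i2, h, hieq⟩
        · exact ⟨i2, i1, h, hieq.symm⟩
      refine ⟨M.est (w j1), M.est_reachable _ (hEne j1), hqcard, xf j1, hmem j1,
        xf (j1 + a), seg s j1 (j1 + a), seg s (j1 + a) (j1 + b), ?_, ?_, ?_⟩
      · refine ⟨M.run_seg' hxfd (by omega), ?_⟩
        intro t ht
        obtain ⟨i, hi1, hi2, hte⟩ := mem_seg ht
        rw [hte]
        exact hunobs i (by omega)
      · intro hc
        have := seg_length s (j1 + a) (j1 + b)
        rw [hc] at this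
        simp at this
        omega
      · refine ⟨?_, ?_⟩
        · have := M.run_seg' hxfd (by omega : j1 + a ≤ j1 + b)
          rwa [← habeq] at this
        · intro t ht
          obtain ⟨i, hi1, hi2, hte⟩ := mem_seg ht
          rw [hte]
          exact hunobs i (by omega)

end FSA
/-- `S` is not SPD iff in its observer `S_obs`: (3) there are a reachable
state `q` and `x ∈ q` with `|q| > 1` and a transition sequence `x →^{s1} x' →^{s2} x'`
in `S` with `s1 ∈ (T_uo)*`, `s2 ∈ (T_uo)^+`; or (4) there is a reachable transition
cycle of `S_obs` no state of which is a singleton. -/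
theorem not_spd_iff_observer {X T O : Type} [Fintype X] [Fintype T] [Fintype O]
    (M : FSA X T O) :
    ¬ M.SPD ↔
      ((∃ q : Set X, M.ObsReachable q ∧ 1 < q.ncard ∧
          ∃ x ∈ q, ∃ (x' : X) (s1 s2 : List T),
            M.UnobsRun x s1 x' ∧ s2 ≠ [] ∧ M.UnobsRun x' s2 x') ∨
       (∃ (n : ℕ), 0 < n ∧ ∃ (q : Fin (n + 1) → Set X) (σ : Fin n → O),
          M.ObsReachable (q 0) ∧ q 0 = q (Fin.last n) ∧
          (∀ i : Fin n, M.obsTrans (q i.castSucc) (σ i) (q i.succ)) ∧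
          ∀ i : Fin (n + 1), (q i).ncard ≠ 1)) := by
  constructor
  · intro hnspd
    by_contra hcon
    rw [not_or] at hcon
    exact hnspd (M.spd_of_not_conds hcon.1 hcon.2)
  · rintro (h | h)
    · exact M.cond3_not_spd h
    · exact M.cond4_not_spd h
end

section
/- Let S be an FSA with observer S_obs and detector S_det. For every transition (q,σ,q')∈δ_obs of the observer and for every nonempty subset q̄'⊆q' with |q̄'|=2 whenever |q'|≥2, there exists q̄⊆q with (q̄,σ,q̄')∈δ_det, where |q̄|=2 whenever |q|≥2. -/
lemma FSA.ReachO_mono {X T O : Type} (M : FSA X T O) (σ : O) {s t : Set X} (h : s ⊆ t) :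
    M.ReachO σ s ⊆ M.ReachO σ t := by
  rintro x ⟨y, hy, e, hd, hl⟩
  exact ⟨y, h hy, e, hd, hl⟩

lemma FSA.UR_mono {X T O : Type} (M : FSA X T O) {s t : Set X} (h : s ⊆ t) :
    M.UR s ⊆ M.UR t := by
  rintro x ⟨y, hy, l, hr⟩
  exact ⟨y, h hy, l, hr⟩

lemma FSA.source {X T O : Type} (M : FSA X T O) {q : Set X} {σ : O} {a : X}
    (ha : a ∈ M.UR (M.ReachO σ q)) : ∃ x ∈ q, a ∈ M.UR (M.ReachO σ {x}) := by
  obtain ⟨y, ⟨x, hx, t, hd, hl⟩, s, hrun⟩ := ha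
  exact ⟨x, hx, y, ⟨x, rfl, t, hd, hl⟩, s, hrun⟩

lemma pad_aux {X : Type} [Fintype X] {q : Set X} {xa xb : X} (ha : xa ∈ q) (hb : xb ∈ q) :
    ∃ qb : Set X, xa ∈ qb ∧ xb ∈ qb ∧ qb ⊆ q ∧ (2 ≤ q.ncard → qb.ncard = 2) := by
  rcases eq_or_ne xa xb with rfl | hx
  · by_cases h2 : 2 ≤ q.ncard
    · obtain ⟨y, hy, hyx⟩ := Set.exists_ne_of_one_lt_ncard h2 xa
      exact ⟨{xa, y}, by simp, by simp, Set.insert_subset ha (by simpa using hy),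
        fun _ => Set.ncard_pair (Ne.symm hyx)⟩
    · exact ⟨{xa}, rfl, rfl, Set.singleton_subset_iff.mpr ha, fun h => absurd h h2⟩
  · exact ⟨{xa, xb}, by simp, by simp, Set.insert_subset ha (by simpa using hb),
      fun _ => Set.ncard_pair hx⟩

/-- For every observer transition `(q,σ,q') ∈ δ_obs` and every nonempty
`q̄' ⊆ q'` with `|q̄'| = 2` whenever `|q'| ≥ 2`, there is `q̄ ⊆ q` with
`(q̄,σ,q̄') ∈ δ_det`, where `|q̄| = 2` whenever `|q| ≥ 2`. -/
theorem observer_to_detector {X T O : Type} [Fintype X] [Fintype T] [Fintype O]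
    (M : FSA X T O) (q q' qb' : Set X) (σ : O)
    (h : M.obsTrans q σ q') (hsub : qb' ⊆ q') (hne : qb'.Nonempty)
    (hcard : 2 ≤ q'.ncard → qb'.ncard = 2) :
    ∃ qb : Set X, qb ⊆ q ∧ M.detTrans qb σ qb' ∧ (2 ≤ q.ncard → qb.ncard = 2) := by
  obtain ⟨rfl, hq'ne⟩ := h
  by_cases h2 : 2 ≤ (M.UR (M.ReachO σ q)).ncard
  · obtain ⟨a, b, hab, rfl⟩ := Set.ncard_eq_two.mp (hcard h2)
    obtain ⟨xa, hxa, hUa⟩ := M.source (hsub (show a ∈ ({a, b} : Set X) by simp))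
    obtain ⟨xb, hxb, hUb⟩ := M.source (hsub (show b ∈ ({a, b} : Set X) by simp))
    obtain ⟨qb, hma, hmb, hqb, hc2⟩ := pad_aux hxa hxb
    have hsub' : ({a, b} : Set X) ⊆ M.UR (M.ReachO σ qb) := by
      rw [Set.insert_subset_iff, Set.singleton_subset_iff]
      exact ⟨M.UR_mono (M.ReachO_mono σ (Set.singleton_subset_iff.mpr hma)) hUa,
        M.UR_mono (M.ReachO_mono σ (Set.singleton_subset_iff.mpr hmb)) hUb⟩
    refine ⟨qb, hqb, Or.inl ⟨?_, hsub', Set.ncard_pair hab⟩, hc2⟩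
    calc 1 < ({a, b} : Set X).ncard := by rw [Set.ncard_pair hab]; norm_num
      _ ≤ _ := Set.ncard_le_ncard hsub' (Set.toFinite _)
  · have hR1 : (M.UR (M.ReachO σ q)).ncard = 1 := by
      have := (Set.ncard_pos (Set.toFinite _)).mpr hq'ne
      omega
    have hqb'1 : 1 ≤ qb'.ncard := (Set.ncard_pos (Set.toFinite _)).mpr hne
    have hqb'R : qb' = M.UR (M.ReachO σ q) :=
      Set.eq_of_subset_of_ncard_le hsub (by omega) (Set.toFinite _)
    obtain ⟨a, ha⟩ := hne
    obtain ⟨xa, hxa, hUa⟩ := M.source (hsub ha)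
    obtain ⟨qb, hma, _, hqb, hc2⟩ := pad_aux hxa hxa
    have hUsub : M.UR (M.ReachO σ qb) ⊆ M.UR (M.ReachO σ q) :=
      M.UR_mono (M.ReachO_mono σ hqb)
    have haU : a ∈ M.UR (M.ReachO σ qb) :=
      M.UR_mono (M.ReachO_mono σ (Set.singleton_subset_iff.mpr hma)) hUa
    have hU1 : 1 ≤ (M.UR (M.ReachO σ qb)).ncard :=
      (Set.ncard_pos (Set.toFinite _)).mpr ⟨a, haU⟩
    have hUeq : M.UR (M.ReachO σ qb) = M.UR (M.ReachO σ q) :=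
      Set.eq_of_subset_of_ncard_le hUsub (by omega) (Set.toFinite _)
    exact ⟨qb, hqb, Or.inr ⟨by rw [hUeq, hR1], by rw [hUeq, hqb'R]⟩, hc2⟩
end

section
/- Let S be an FSA with detector S_det and ε-extended self-composition CC^ε_A(S), and let x1,x3,x4∈X with x3≠x4. For every transition {x1}→^σ{x3,x4} in S_det, there is a transition sequence (x1,x1)→^{s'}(x3,x4) in CC^ε_A(S) with ℓ(s')=σ. -/
lemma ccrun_append {X T O : Type} (M : FSA X T O) :
    ∀ (s1 : List (CEvent T)) (p q r : X × X),
      M.CCRun p s1 q → ∀ s2, M.CCRun q s2 r → M.CCRun p (s1 ++ s2) r := by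
  intro s1
  induction s1 with
  | nil => intro p q r h s2 h2; cases h; exact h2
  | cons e s ih =>
    rintro p q r ⟨m, he, hrun⟩ s2 h2
    exact ⟨m, he, ih m q r hrun s2 h2⟩

lemma ccrun_left {X T O : Type} (M : FSA X T O) :
    ∀ (s : List T) (a a' b : X), M.UnobsRun a s a' →
      M.CCRun (a, b) (s.map CEvent.left) (a', b) := by
  intro s
  induction s with
  | nil => rintro a a' b ⟨h, _⟩; cases h; rfl
  | cons t s ih =>
    rintro a a' b ⟨⟨y, hd, hr⟩, hl⟩
    exact ⟨(y, b), Or.inl ⟨hd, hl t (by simp), rfl⟩,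
      ih y a' b ⟨hr, fun u hu => hl u (by simp [hu])⟩⟩

lemma ccrun_right {X T O : Type} (M : FSA X T O) :
    ∀ (s : List T) (a b b' : X), M.UnobsRun b s b' →
      M.CCRun (a, b) (s.map CEvent.right) (a, b') := by
  intro s
  induction s with
  | nil => rintro a b b' ⟨h, _⟩; cases h; rfl
  | cons t s ih =>
    rintro a b b' ⟨⟨y, hd, hr⟩, hl⟩
    exact ⟨(a, y), Or.inl ⟨rfl, hl t (by simp), hd⟩,
      ih a y b' ⟨hr, fun u hu => hl u (by simp [hu])⟩⟩

lemma label_left {X T O : Type} (M : FSA X T O) (s : List T) :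
    M.ccLabelSeq (s.map CEvent.left) = [] := by
  induction s with
  | nil => rfl
  | cons t s ih => simpa [FSA.ccLabelSeq, FSA.cLabel] using ih

lemma label_right {X T O : Type} (M : FSA X T O) (s : List T) :
    M.ccLabelSeq (s.map CEvent.right) = [] := by
  induction s with
  | nil => rfl
  | cons t s ih => simpa [FSA.ccLabelSeq, FSA.cLabel] using ih

/-- For states `x3 ≠ x4`, every detector transition `{x1} →^σ {x3,x4}`
yields a transition sequence `(x1,x1) →^{s'} (x3,x4)` in `CC^ε_A(S)` with `ℓ(s') = σ`. -/
theorem detector_to_cc_one_two {X T O : Type} [Fintype X] [Fintype T] [Fintype O]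
    (M : FSA X T O) (x1 x3 x4 : X) (σ : O)
    (h34 : x3 ≠ x4)
    (h : M.detTrans {x1} σ {x3, x4}) :
    ∃ s' : List (CEvent T),
      M.CCRun (x1, x1) s' (x3, x4) ∧ M.ccLabelSeq s' = [σ] := by
  have hsub : ({x3, x4} : Set X) ⊆ M.UR (M.ReachO σ {x1}) := by
    rcases h with ⟨_, hsub, _⟩ | ⟨hc, heq⟩
    · exact hsub
    · rw [heq]
  have h3 : x3 ∈ M.UR (M.ReachO σ {x1}) := hsub (by simp)
  have h4 : x4 ∈ M.UR (M.ReachO σ {x1}) := hsub (by simp)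
  obtain ⟨y3, ⟨z3, hz3, t3, hd3, hl3⟩, s3, hu3⟩ := h3
  obtain ⟨y4, ⟨z4, hz4, t4, hd4, hl4⟩, s4, hu4⟩ := h4
  rcases hz3 with rfl
  rcases hz4 with rfl
  refine ⟨CEvent.both t3 t4 :: (s3.map CEvent.left ++ s4.map CEvent.right), ?_, ?_⟩
  · refine ⟨(y3, y4), Or.inl ⟨hd3, hd4, σ, hl3, hl4⟩, ?_⟩
    exact ccrun_append M _ _ (x3, y4) _ (ccrun_left M s3 y3 x3 y4 hu3) _
      (ccrun_right M s4 x3 y4 x4 hu4)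
  · simp only [FSA.ccLabelSeq, List.filterMap_cons, List.filterMap_append]
    rw [← FSA.ccLabelSeq, ← FSA.ccLabelSeq, label_left, label_right]
    simp [FSA.cLabel, hl3]
end

section
/- Let S be an FSA with detector S_det and ε-extended self-composition CC^ε_A(S), and let x1,x3∈X. For every transition {x1}→^σ{x3} in S_det, there is a transition sequence (x1,x1)→^{s'}(x3,x3) in CC^ε_A(S) with ℓ(s')=σ. -/
lemma unobs_to_cc {X T O : Type} (M : FSA X T O) :
    ∀ (x : X) (s : List T) (x' : X), M.Run x s x' → (∀ t ∈ s, M.label t = none) →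
      M.CCRun (x, x) (s.flatMap fun u => [CEvent.left u, CEvent.right u]) (x', x') ∧
      M.ccLabelSeq (s.flatMap fun u => [CEvent.left u, CEvent.right u]) = [] := by
  intro x s
  induction s generalizing x with
  | nil => intro x' hr _; cases hr; exact ⟨rfl, rfl⟩
  | cons t s ih =>
    intro x' hr hu
    obtain ⟨y, hd, hr'⟩ := hr
    have hlt : M.label t = none := hu t (by simp)
    obtain ⟨h1, h2⟩ := ih y x' hr' (fun u hus => hu u (by simp [hus]))
    refine ⟨⟨(y, x), Or.inl ⟨hd, hlt, rfl⟩, (y, y), Or.inl ⟨rfl, hlt, hd⟩, h1⟩, ?_⟩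
    simpa [FSA.ccLabelSeq, FSA.cLabel] using h2

/-- Every detector transition `{x1} →^σ {x3}` yields a transition
sequence `(x1,x1) →^{s'} (x3,x3)` in `CC^ε_A(S)` with `ℓ(s') = σ`. -/
theorem detector_to_cc_one_one {X T O : Type} [Fintype X] [Fintype T] [Fintype O]
    (M : FSA X T O) (x1 x3 : X) (σ : O)
    (h : M.detTrans {x1} σ {x3}) :
    ∃ s' : List (CEvent T),
      M.CCRun (x1, x1) s' (x3, x3) ∧ M.ccLabelSeq s' = [σ] := by
  -- x3 ∈ UR(Reach_σ({x1}))
  have hx3 : x3 ∈ M.UR (M.ReachO σ {x1}) := by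
    rcases h with ⟨_, hsub, hc⟩ | ⟨_, heq⟩
    · exact hsub rfl
    · rw [← heq]; rfl
  rcases hx3 with ⟨x2, ⟨x1', hx1', t, hdel, hlab⟩, s, hrun, hunobs⟩
  rw [Set.mem_singleton_iff] at hx1'; subst hx1'
  refine ⟨CEvent.both t t :: (s.flatMap fun u => [CEvent.left u, CEvent.right u]), ?_, ?_⟩
  · exact ⟨(x2, x2), Or.inl ⟨hdel, hdel, σ, hlab, hlab⟩,
      (unobs_to_cc M x2 s x3 hrun hunobs).1⟩
  · simp only [FSA.ccLabelSeq, List.filterMap_cons]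
    have := (unobs_to_cc M x2 s x3 hrun hunobs).2
    simp only [FSA.ccLabelSeq] at this
    simp [FSA.cLabel, hlab, this]
end

section
/- Let S be an FSA with observer S_obs and ε-extended self-composition CC^ε_A(S). Consider a transition sequence x0'→^{s0'}x1'→^{t1'}x2'→^{s1'}⋯→^{tn'}x_{2n}'→^{sn'}x_{2n+1}' in CC^ε_A(S), where x0'∈X0', the s_i' are finite sequences of unobservable composed events (including ε), and the t_i' are observable composed events. For each i∈{0,…,n}, let q_i be the union of all components of the states of X×X visited along the segment x_{2i}'→^{s_i'}x_{2i+1}'. Then for every i∈{1,…,n} there exists q̄_i ⊇ q_i such that M(S,ε)→^{ℓ(t1')}q̄1→^{ℓ(t2')}⋯→^{ℓ(tn')}q̄n is a transition sequence of the observer S_obs. -/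
namespace FSAAux

open FSA

variable {X T O : Type}

lemma run_trans (M : FSA X T O) {x x' x'' : X} {s s' : List T}
    (h : M.Run x s x') (h' : M.Run x' s' x'') : M.Run x (s ++ s') x'' := by
  induction s generalizing x with
  | nil => rw [List.nil_append]; exact (show x = x' from h) ▸ h'
  | cons a s ih =>
    obtain ⟨y, hd, hr⟩ := h
    exact ⟨y, hd, ih hr⟩

lemma unobs_trans (M : FSA X T O) {x x' x'' : X} {s s' : List T}
    (h : M.UnobsRun x s x') (h' : M.UnobsRun x' s' x'') : M.UnobsRun x (s ++ s') x'' := by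
  obtain ⟨r1, l1⟩ := h
  obtain ⟨r2, l2⟩ := h'
  refine ⟨run_trans M r1 r2, ?_⟩
  intro a ha
  rcases List.mem_append.mp ha with h | h
  · exact l1 a h
  · exact l2 a h

/-- A set closed under unobservable runs. -/
def Closed (M : FSA X T O) (q : Set X) : Prop :=
  ∀ x ∈ q, ∀ (s : List T) (x' : X), M.UnobsRun x s x' → x' ∈ q

lemma closed_UR (M : FSA X T O) (q : Set X) : Closed M (M.UR q) := by
  rintro x ⟨x0, hx0, s0, hr0⟩ s x' h
  exact ⟨x0, hx0, s0 ++ s, unobs_trans M hr0 h⟩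

lemma mem_UR (M : FSA X T O) {q : Set X} {x : X} (h : x ∈ q) : x ∈ M.UR q :=
  ⟨x, h, [], rfl, by simp⟩

lemma step_unobs (M : FSA X T O) {q : Set X} (hc : Closed M q) {p p' : X × X}
    {ev : CEvent T} (hl : M.cLabel ev = none) (h : M.ccEpsTrans p ev p')
    (h1 : p.1 ∈ q) (h2 : p.2 ∈ q) : p'.1 ∈ q ∧ p'.2 ∈ q := by
  cases ev with
  | both a b =>
    rcases h with h | ⟨heq, _⟩
    · obtain ⟨_, _, σ', hσ, _⟩ := h
      simp only [FSA.cLabel] at hl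
      rw [hl] at hσ; cases hσ
    · cases heq
  | left a =>
    rcases h with ⟨hd, hn, he⟩ | ⟨heq, _⟩
    · refine ⟨hc p.1 h1 [a] p'.1 ⟨⟨p'.1, hd, rfl⟩, ?_⟩, he ▸ h2⟩
      intro b hb
      rw [List.mem_singleton] at hb
      subst hb; exact hn
    · cases heq
  | right a =>
    rcases h with ⟨he, hn, hd⟩ | ⟨heq, _⟩
    · refine ⟨he ▸ h1, hc p.2 h2 [a] p'.2 ⟨⟨p'.2, hd, rfl⟩, ?_⟩⟩
      intro b hb
      rw [List.mem_singleton] at hb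
      subst hb; exact hn
    · cases heq
  | eps =>
    rcases h with h | ⟨_, _, hp', _⟩
    · exact h.elim
    · rcases hp' with h' | h' <;> subst h'
      · exact ⟨h1, h1⟩
      · exact ⟨h2, h2⟩

lemma seg (M : FSA X T O) {q : Set X} (hc : Closed M q) {m : ℕ}
    {z : Fin (m + 1) → X × X} {e : Fin m → CEvent T}
    (hs : ∀ j : Fin m, M.ccEpsTrans (z j.castSucc) (e j) (z j.succ) ∧ M.cLabel (e j) = none)
    (h0 : (z 0).1 ∈ q ∧ (z 0).2 ∈ q) :
    ∀ j : Fin (m + 1), (z j).1 ∈ q ∧ (z j).2 ∈ q := by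
  intro j
  induction j using Fin.induction with
  | zero => exact h0
  | succ j ih => exact step_unobs M hc (hs j).2 (hs j).1 ih.1 ih.2

def obsIter (M : FSA X T O) {n : ℕ} (σ : Fin n → O) : ℕ → Set X
  | 0 => M.obsInit
  | k + 1 => if h : k < n then M.UR (M.ReachO (σ ⟨k, h⟩) (obsIter M σ k)) else ∅

lemma closed_obsIter (M : FSA X T O) {n : ℕ} (σ : Fin n → O) :
    ∀ k, Closed M (obsIter M σ k)
  | 0 => closed_UR M M.init
  | k + 1 => by
    unfold obsIter
    split
    · exact closed_UR M _
    · exact fun x hx _ _ _ => hx.elim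

end FSAAux

/-- Consider a transition sequence
`x0' →^{s0'} x1' →^{t1'} x2' →^{s1'} ⋯ →^{tn'} x_{2n}' →^{sn'} x_{2n+1}'` in
`CC^ε_A(S)` starting in `X0' = X0 × X0`, where the `i`-th unobservable segment is the
path `z i 0, …, z i (L i)` with unobservable composed events `e i` and the observable
composed events are `t i` with labels `σ i`. Let `q_i` be the union of all components
of the states visited along the `i`-th segment. Then there are sets `q̄_i ⊇ q_i`
(`i = 1, …, n`) such that `M(S,ε) →^{σ 1} q̄_1 →^{σ 2} ⋯ →^{σ n} q̄_n` is a transition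
sequence of the observer `S_obs`. -/
theorem cc_run_to_observer_run {X T O : Type} [Fintype X] [Fintype T] [Fintype O]
    (M : FSA X T O) (n : ℕ)
    (L : Fin (n + 1) → ℕ)
    (z : (i : Fin (n + 1)) → Fin (L i + 1) → X × X)
    (e : (i : Fin (n + 1)) → Fin (L i) → CEvent T)
    (t : Fin n → CEvent T) (σ : Fin n → O)
    (hinit : (z 0 0).1 ∈ M.init ∧ (z 0 0).2 ∈ M.init)
    (hseg : ∀ (i : Fin (n + 1)) (j : Fin (L i)),
      M.ccEpsTrans (z i j.castSucc) (e i j) (z i j.succ) ∧ M.cLabel (e i j) = none)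
    (hobs : ∀ i : Fin n, M.cLabel (t i) = some (σ i) ∧
      M.ccEpsTrans (z i.castSucc (Fin.last (L i.castSucc))) (t i) (z i.succ 0)) :
    ∃ qb : Fin (n + 1) → Set X,
      qb 0 = M.obsInit ∧
      (∀ i : Fin n, M.obsTrans (qb i.castSucc) (σ i) (qb i.succ)) ∧
      ∀ i : Fin n,
        {a : X | ∃ j : Fin (L i.succ + 1), a = (z i.succ j).1 ∨ a = (z i.succ j).2}
          ⊆ qb i.succ := by
  have key : ∀ i : Fin (n + 1), ∀ j : Fin (L i + 1),
      (z i j).1 ∈ FSAAux.obsIter M σ i.val ∧ (z i j).2 ∈ FSAAux.obsIter M σ i.val := by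
    intro i
    induction i using Fin.induction with
    | zero =>
      exact FSAAux.seg M (FSAAux.closed_obsIter M σ 0) (hseg 0)
        ⟨FSAAux.mem_UR M hinit.1, FSAAux.mem_UR M hinit.2⟩
    | succ i ih =>
      obtain ⟨hlab, htr⟩ := hobs i
      have hval : FSAAux.obsIter M σ i.succ.val =
          M.UR (M.ReachO (σ i) (FSAAux.obsIter M σ i.val)) := by
        show FSAAux.obsIter M σ (i.val + 1) = _
        rw [FSAAux.obsIter, dif_pos i.isLt, Fin.eta]
      have h0 : (z i.succ 0).1 ∈ FSAAux.obsIter M σ i.succ.val ∧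
          (z i.succ 0).2 ∈ FSAAux.obsIter M σ i.succ.val := by
        rw [hval]
        have hlast := ih (Fin.last (L i.castSucc))
        rcases htr with htr | ⟨heq, _⟩
        · cases hti : t i with
          | both a b =>
            rw [hti] at htr hlab
            obtain ⟨hd1, hd2, σ', hσ1, hσ2⟩ := htr
            simp only [FSA.cLabel] at hlab
            rw [hlab] at hσ1
            have hσ' : σ' = σ i := by cases hσ1; rfl
            subst hσ'
            constructor
            · exact FSAAux.mem_UR M ⟨_, hlast.1, a, hd1, hlab⟩
            · exact FSAAux.mem_UR M ⟨_, hlast.2, b, hd2, hσ2⟩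
          | left a => rw [hti] at hlab; simp [FSA.cLabel] at hlab
          | right a => rw [hti] at hlab; simp [FSA.cLabel] at hlab
          | eps => rw [hti] at htr; exact htr.elim
        · rw [heq] at hlab; simp [FSA.cLabel] at hlab
      exact FSAAux.seg M (FSAAux.closed_obsIter M σ i.succ.val) (hseg i.succ) h0
  refine ⟨fun i => FSAAux.obsIter M σ i.val, rfl, ?_, ?_⟩
  · intro i
    constructor
    · show FSAAux.obsIter M σ (i.val + 1) = _
      rw [FSAAux.obsIter, dif_pos i.isLt, Fin.eta]
      rfl
    · exact ⟨(z i.succ 0).1, (key i.succ 0).1⟩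
  · rintro i a ⟨j, hj | hj⟩ <;> subst hj
    · exact (key i.succ j).1
    · exact (key i.succ j).2
end
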